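/- arXiv:1601.02912 — 12 statements merged into one kernel-verified Lean document; each statement's English description precedes it below -/
import Mathlib

section
/- Let J : ℝ^n → ℝ be convex and absolutely one-homogeneous, let N(J) = {u : J(u) = 0} and let c₀ > 0 satisfy c₀·‖w‖ ≤ J(w) for all w ∈ N(J)^⊥. Then every p ∈ N(J)^⊥ with ‖p‖ < c₀ belongs to ∂J(0), and moreover such p satisfies the strict inequality ⟨p, u⟩ < J(u) for every u ∈ ℝ^n whose orthogonal projection onto N(J)^⊥ is nonzero. In particular, ∂J(0) has nonempty relative interior in N(J)^⊥. -/
open RealInnerProductSpace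

/-- The subdifferential of `J` at `u`:
`∂J(u) = {p | ∀ v, J v ≥ J u + ⟪p, v - u⟫}`. -/
def subdiff {n : ℕ} (J : EuclideanSpace ℝ (Fin n) → ℝ)
    (u : EuclideanSpace ℝ (Fin n)) : Set (EuclideanSpace ℝ (Fin n)) :=
  {p | ∀ v, J u + ⟪p, v - u⟫ ≤ J v}

lemma J_zero {n : ℕ} (J : EuclideanSpace ℝ (Fin n) → ℝ)
    (hhom : ∀ (s : ℝ) (u : EuclideanSpace ℝ (Fin n)), J (s • u) = |s| * J u) :
    J 0 = 0 := by
  have := hhom 0 0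
  simpa using this

lemma J_subadd {n : ℕ} (J : EuclideanSpace ℝ (Fin n) → ℝ)
    (hconv : ConvexOn ℝ Set.univ J)
    (hhom : ∀ (s : ℝ) (u : EuclideanSpace ℝ (Fin n)), J (s • u) = |s| * J u)
    (a b : EuclideanSpace ℝ (Fin n)) : J (a + b) ≤ J a + J b := by
  have h := hconv.2 (Set.mem_univ a) (Set.mem_univ b)
      (by norm_num : (0:ℝ) ≤ (1/2:ℝ)) (by norm_num : (0:ℝ) ≤ (1/2:ℝ)) (by norm_num)
  have h2 : J ((1/2 : ℝ) • (a + b)) = (1/2) * J (a + b) := by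
    rw [hhom]; norm_num
  have h3 : (1/2 : ℝ) • (a + b) = (1/2 : ℝ) • a + (1/2 : ℝ) • b := by
    rw [smul_add]
  rw [h3] at h2
  rw [h2] at h
  simp only [smul_eq_mul] at h
  linarith

lemma J_add_null {n : ℕ} (J : EuclideanSpace ℝ (Fin n) → ℝ)
    (hconv : ConvexOn ℝ Set.univ J)
    (hhom : ∀ (s : ℝ) (u : EuclideanSpace ℝ (Fin n)), J (s • u) = |s| * J u)
    (u v : EuclideanSpace ℝ (Fin n)) (hv : J v = 0) : J (u + v) = J u := by
  have hnv : J (-v) = 0 := by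
    have := hhom (-1) v
    simp [hv] at this
    simpa using this
  have h1 : J (u + v) ≤ J u := by
    have := J_subadd J hconv hhom u v
    simpa [hv] using this
  have h2 : J u ≤ J (u + v) := by
    have := J_subadd J hconv hhom (u + v) (-v)
    simpa [hnv] using this
  linarith

/-- If `c₀ > 0` satisfies `c₀ ‖w‖ ≤ J w` on `N(J)ᗮ`, then every
`p ∈ N(J)ᗮ` with `‖p‖ < c₀` lies in `∂J(0)` and satisfies the strict inequality
`⟪p, u⟫ < J u` for every `u` whose orthogonal projection onto `N(J)ᗮ` is nonzero. -/
theorem small_orthogonal_elements_in_subdiff_zero {n : ℕ}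
    (J : EuclideanSpace ℝ (Fin n) → ℝ)
    (hconv : ConvexOn ℝ Set.univ J)
    (hhom : ∀ (s : ℝ) (u : EuclideanSpace ℝ (Fin n)), J (s • u) = |s| * J u)
    (N : Submodule ℝ (EuclideanSpace ℝ (Fin n)))
    (hN : (N : Set (EuclideanSpace ℝ (Fin n))) = {u | J u = 0})
    (c₀ : ℝ) (hc₀ : 0 < c₀)
    (hlower : ∀ w ∈ Nᗮ, c₀ * ‖w‖ ≤ J w) :
    ∀ p ∈ Nᗮ, ‖p‖ < c₀ →
      p ∈ subdiff J 0 ∧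
      ∀ u : EuclideanSpace ℝ (Fin n),
        (Submodule.orthogonalProjection Nᗮ u : EuclideanSpace ℝ (Fin n)) ≠ 0 → ⟪p, u⟫ < J u := by
  intro p hp hplt
  -- key decomposition facts
  have key : ∀ u : EuclideanSpace ℝ (Fin n),
      ⟪p, u⟫ = ⟪p, (Submodule.orthogonalProjection Nᗮ u : EuclideanSpace ℝ (Fin n))⟫ ∧
      J u = J (Submodule.orthogonalProjection Nᗮ u : EuclideanSpace ℝ (Fin n)) := by
    intro u
    set w : EuclideanSpace ℝ (Fin n) := (Submodule.orthogonalProjection Nᗮ u : EuclideanSpace ℝ (Fin n))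
        with hw
    have hres : u - w ∈ Nᗮᗮ := Submodule.sub_starProjection_mem_orthogonal (K := Nᗮ) u
    have hresN : u - w ∈ N := by
      rwa [Submodule.orthogonal_orthogonal] at hres
    have hJres : J (u - w) = 0 := by
      have : (u - w) ∈ {u | J u = 0} := by rw [← hN]; exact hresN
      exact this
    constructor
    · have hz : ⟪p, u - w⟫ = 0 :=
        Submodule.inner_right_of_mem_orthogonal (K := Nᗮ) (by exact hp) hres
      have : ⟪p, u⟫ = ⟪p, w⟫ + ⟪p, u - w⟫ := by
        rw [← inner_add_right]; congr 1; abel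
      rw [this, hz, add_zero]
    · have := J_add_null J hconv hhom w (u - w) hJres
      have he : w + (u - w) = u := by abel
      rw [he] at this
      exact this
  have hle : ∀ u : EuclideanSpace ℝ (Fin n), ⟪p, u⟫ ≤ J u := by
    intro u
    obtain ⟨h1, h2⟩ := key u
    set w : EuclideanSpace ℝ (Fin n) := (Submodule.orthogonalProjection Nᗮ u : EuclideanSpace ℝ (Fin n))
    have hcs : ⟪p, w⟫ ≤ ‖p‖ * ‖w‖ := real_inner_le_norm p w
    have hJw : c₀ * ‖w‖ ≤ J w := hlower w (Submodule.orthogonalProjection Nᗮ u).2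
    have : ‖p‖ * ‖w‖ ≤ c₀ * ‖w‖ :=
      mul_le_mul_of_nonneg_right hplt.le (norm_nonneg _)
    rw [h1, h2]; linarith
  constructor
  · intro v
    have := hle v
    simpa [J_zero J hhom] using this
  · intro u hu
    obtain ⟨h1, h2⟩ := key u
    set w : EuclideanSpace ℝ (Fin n) := (Submodule.orthogonalProjection Nᗮ u : EuclideanSpace ℝ (Fin n))
    have hwpos : 0 < ‖w‖ := norm_pos_iff.mpr hu
    have hcs : ⟪p, w⟫ ≤ ‖p‖ * ‖w‖ := real_inner_le_norm p w
    have hJw : c₀ * ‖w‖ ≤ J w := hlower w (Submodule.orthogonalProjection Nᗮ u).2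
    have : ‖p‖ * ‖w‖ < c₀ * ‖w‖ := mul_lt_mul_of_pos_right hplt hwpos
    rw [h1, h2]; linarith
end

section
/- Let J : ℝ^n → ℝ be convex and absolutely one-homogeneous. Suppose p ∈ ∂J(0) is such that there exists a constant c > 1 with c·p ∈ ∂J(0). If p ∈ ∂J(u) for some u ∈ ℝ^n, then J(u) = 0. -/
open RealInnerProductSpace

/-- If `p ∈ ∂J(0)` and `c • p ∈ ∂J(0)` for some `c > 1`, then
`p ∈ ∂J(u)` implies `J u = 0`. -/
theorem relative_interior_subgradient_forces_nullspace {n : ℕ}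
    (J : EuclideanSpace ℝ (Fin n) → ℝ)
    (hconv : ConvexOn ℝ Set.univ J)
    (hhom : ∀ (s : ℝ) (u : EuclideanSpace ℝ (Fin n)), J (s • u) = |s| * J u)
    (p : EuclideanSpace ℝ (Fin n)) (hp : p ∈ subdiff J 0)
    (c : ℝ) (hc : 1 < c) (hcp : c • p ∈ subdiff J 0)
    (u : EuclideanSpace ℝ (Fin n)) (hpu : p ∈ subdiff J u) :
    J u = 0 := by
  have h0 : J 0 = 0 := by
    have := hhom 0 0
    simpa using this
  -- J u ≤ ⟪p,u⟫
  have h1 := hpu 0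
  rw [h0, zero_sub, inner_neg_right] at h1
  have hJle : J u ≤ ⟪p, u⟫ := by linarith
  -- c⟪p,u⟫ ≤ J u
  have h2 := hcp u
  rw [h0, sub_zero, real_inner_smul_left] at h2
  -- J u ≥ 0
  have hneg : J (-u) = J u := by
    have := hhom (-1) u
    simpa using this
  have hmid : J 0 ≤ (1/2 : ℝ) * J u + (1/2 : ℝ) * J (-u) := by
    have := hconv.2 (Set.mem_univ u) (Set.mem_univ (-u))
      (by norm_num : (0:ℝ) ≤ 1/2) (by norm_num : (0:ℝ) ≤ 1/2) (by norm_num)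
    simpa using this
  have hJnn : 0 ≤ J u := by rw [h0, hneg] at hmid; linarith
  -- conclude
  have hip : ⟪p, u⟫ ≤ 0 := by nlinarith
  linarith
end

section
/- Let J : ℝ^n → ℝ be convex and absolutely one-homogeneous and let f ∈ ℝ^n. Then there exists a finite time T > 0 such that for all t ≥ T, the projection P₀(f) of f onto the nullspace N(J) is the unique minimizer of the variational problem u ↦ (1/2)·‖u − f‖² + t·J(u). Equivalently, (f − P₀(f))/t ∈ ∂J(P₀(f)) for all t ≥ T. -/
open RealInnerProductSpace

section Aux
variable {n : ℕ} {J : EuclideanSpace ℝ (Fin n) → ℝ}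

lemma aux_subadd (hconv : ConvexOn ℝ Set.univ J)
    (hhom : ∀ (s : ℝ) (u : EuclideanSpace ℝ (Fin n)), J (s • u) = |s| * J u)
    (a b : EuclideanSpace ℝ (Fin n)) : J (a + b) ≤ J a + J b := by
  have h := hconv.2 (Set.mem_univ a) (Set.mem_univ b)
    (by norm_num : (0:ℝ) ≤ 1/2) (by norm_num : (0:ℝ) ≤ 1/2) (by norm_num)
  simp only [smul_eq_mul] at h
  have h2 : J (a + b) = 2 * J ((1/2:ℝ) • a + (1/2:ℝ) • b) := by
    rw [← smul_add, hhom]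
    rw [abs_of_nonneg (by norm_num : (0:ℝ) ≤ 1/2)]
    ring
  nlinarith [h, h2]

lemma aux_nonneg (hconv : ConvexOn ℝ Set.univ J)
    (hhom : ∀ (s : ℝ) (u : EuclideanSpace ℝ (Fin n)), J (s • u) = |s| * J u)
    (a : EuclideanSpace ℝ (Fin n)) : 0 ≤ J a := by
  have h0 : J 0 = 0 := by have := hhom 0 0; simpa using this
  have hs := aux_subadd hconv hhom a (-a)
  have hneg : J (-a) = J a := by
    have := hhom (-1) a; simpa using this
  simp [h0, hneg] at hs
  linarith

lemma aux_transl (hconv : ConvexOn ℝ Set.univ J)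
    (hhom : ∀ (s : ℝ) (u : EuclideanSpace ℝ (Fin n)), J (s • u) = |s| * J u)
    {a b : EuclideanSpace ℝ (Fin n)} (hb : J b = 0) : J (a + b) = J a := by
  have h1 := aux_subadd hconv hhom a b
  have h2 := aux_subadd hconv hhom (a + b) (-b)
  have hnb : J (-b) = 0 := by have := hhom (-1) b; simpa [hb] using this
  simp [hnb] at h2
  linarith

end Aux

/-- Finite time extinction of the variational method: there is a
finite `T > 0` such that for all `t ≥ T` the projection `P₀ f` of `f` onto the
nullspace `N(J)` is the unique minimizer of `u ↦ (1/2)‖u - f‖² + t J(u)`;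
equivalently `(f - P₀ f)/t ∈ ∂J(P₀ f)`. -/
theorem variational_finite_time_extinction {n : ℕ}
    (J : EuclideanSpace ℝ (Fin n) → ℝ)
    (hconv : ConvexOn ℝ Set.univ J)
    (hhom : ∀ (s : ℝ) (u : EuclideanSpace ℝ (Fin n)), J (s • u) = |s| * J u)
    (N : Submodule ℝ (EuclideanSpace ℝ (Fin n)))
    (hN : (N : Set (EuclideanSpace ℝ (Fin n))) = {u | J u = 0})
    (f : EuclideanSpace ℝ (Fin n)) :
    ∃ T : ℝ, 0 < T ∧ ∀ t : ℝ, T ≤ t →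
      (1 / t) • (f - (Submodule.orthogonalProjection N f : EuclideanSpace ℝ (Fin n))) ∈
        subdiff J (Submodule.orthogonalProjection N f : EuclideanSpace ℝ (Fin n)) ∧
      (∀ u : EuclideanSpace ℝ (Fin n),
        (1 / 2) * ‖(Submodule.orthogonalProjection N f : EuclideanSpace ℝ (Fin n)) - f‖ ^ 2 +
            t * J (Submodule.orthogonalProjection N f : EuclideanSpace ℝ (Fin n)) ≤
          (1 / 2) * ‖u - f‖ ^ 2 + t * J u) ∧
      (∀ u : EuclideanSpace ℝ (Fin n),
        ((1 / 2) * ‖u - f‖ ^ 2 + t * J u =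
          (1 / 2) * ‖(Submodule.orthogonalProjection N f : EuclideanSpace ℝ (Fin n)) - f‖ ^ 2 +
            t * J (Submodule.orthogonalProjection N f : EuclideanSpace ℝ (Fin n))) →
        u = (Submodule.orthogonalProjection N f : EuclideanSpace ℝ (Fin n))) := by
  classical
  set u : EuclideanSpace ℝ (Fin n) := (Submodule.orthogonalProjection N f : EuclideanSpace ℝ (Fin n)) with hu
  have hJ0 : ∀ x ∈ N, J x = 0 := by
    intro x hx
    have : x ∈ (N : Set (EuclideanSpace ℝ (Fin n))) := hx
    rw [hN] at this; exact this
  have hJnn := aux_nonneg hconv hhom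
  have huN : u ∈ N := (Submodule.orthogonalProjection N f).2
  have hJu : J u = 0 := hJ0 u huN
  have hfu : f - u ∈ Nᗮ := Submodule.sub_starProjection_mem_orthogonal (K := N) f
  -- key bound: exists C ≥ 0 with ⟪f - u, v - u⟫ ≤ C * J v for all v
  have key : ∃ C : ℝ, 0 ≤ C ∧ ∀ v, ⟪f - u, v - u⟫ ≤ C * J v := by
    by_cases hfu0 : f - u = 0
    · exact ⟨0, le_refl 0, fun v => by simp [hfu0, hJnn v]⟩
    · -- sphere of Nᗮ
      set S : Set (EuclideanSpace ℝ (Fin n)) := {w | w ∈ Nᗮ ∧ ‖w‖ = 1} with hS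
      have hScomp : IsCompact S := by
        refine Metric.isCompact_of_isClosed_isBounded ?_ ?_
        · exact IsClosed.inter (Nᗮ : Submodule ℝ _).closed_of_finiteDimensional
            (isClosed_eq continuous_norm continuous_const)
        · exact (Metric.isBounded_iff_subset_closedBall 0).2
            ⟨1, fun w hw => by simp [Metric.mem_closedBall, dist_zero_right, hw.2.le]⟩
      have hSne : S.Nonempty := by
        refine ⟨‖f - u‖⁻¹ • (f - u), Nᗮ.smul_mem _ hfu, ?_⟩
        rw [norm_smul, norm_inv, norm_norm, inv_mul_cancel₀ (norm_ne_zero_iff.2 hfu0)]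
      have hJcont : Continuous J := hconv.locallyLipschitz.continuous
      obtain ⟨w₀, hw₀S, hw₀min⟩ := hScomp.exists_isMinOn hSne hJcont.continuousOn
      set m : ℝ := J w₀ with hm
      have hmpos : 0 < m := by
        rcases lt_or_eq_of_le (hJnn w₀) with h | h
        · exact h
        · exfalso
          have hw₀N : w₀ ∈ N := by
            rw [← SetLike.mem_coe, hN]; exact h.symm
          have : w₀ = 0 := by
            have := Submodule.inner_right_of_mem_orthogonal hw₀N hw₀S.1
            have hn : ⟪w₀, w₀⟫ = 0 := by rwa [real_inner_comm] at this
            exact inner_self_eq_zero.mp hn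
          have h1 : ‖w₀‖ = 1 := hw₀S.2
          rw [this, norm_zero] at h1
          exact one_ne_zero h1.symm
      refine ⟨‖f - u‖ / m, by positivity, fun v => ?_⟩
      set w : EuclideanSpace ℝ (Fin n) := v - (Submodule.orthogonalProjection N v : EuclideanSpace ℝ (Fin n)) with hw
      have hwNperp : w ∈ Nᗮ := Submodule.sub_starProjection_mem_orthogonal (K := N) v
      have hvw : J v = J w := by
        have : v = w + (Submodule.orthogonalProjection N v : EuclideanSpace ℝ (Fin n)) := by
          simp [hw]
        rw [this, aux_transl hconv hhom (hJ0 _ (Submodule.orthogonalProjection N v).2)]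
      have hJw : m * ‖w‖ ≤ J w := by
        by_cases hw0 : w = 0
        · have h0 : J (0 : EuclideanSpace ℝ (Fin n)) = 0 := by
            have := hhom 0 0; simpa using this
          rw [hw0, h0, norm_zero, mul_zero]
        · have hwn : ‖w‖ ≠ 0 := norm_ne_zero_iff.2 hw0
          have hmem : ‖w‖⁻¹ • w ∈ S := by
            refine ⟨Nᗮ.smul_mem _ hwNperp, ?_⟩
            rw [norm_smul, norm_inv, norm_norm, inv_mul_cancel₀ hwn]
          have hmin : J w₀ ≤ J (‖w‖⁻¹ • w) := hw₀min hmem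
          have : J (‖w‖⁻¹ • w) = ‖w‖⁻¹ * J w := by
            rw [hhom]; congr 1; simp [abs_of_nonneg (inv_nonneg.2 (norm_nonneg w))]
          rw [this] at hmin
          have hwpos : 0 < ‖w‖ := lt_of_le_of_ne (norm_nonneg w) (Ne.symm hwn)
          calc m * ‖w‖ ≤ (‖w‖⁻¹ * J w) * ‖w‖ := by
                exact mul_le_mul_of_nonneg_right hmin (norm_nonneg w)
            _ = J w := by field_simp
      -- inner product decomposition
      have hdecomp : ⟪f - u, v - u⟫ = ⟪f - u, w⟫ := by
        have : v - u = ((Submodule.orthogonalProjection N v : EuclideanSpace ℝ (Fin n)) - u) + w := by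
          rw [hw]; abel
        rw [this, inner_add_right]
        have hmemN : (Submodule.orthogonalProjection N v : EuclideanSpace ℝ (Fin n)) - u ∈ N :=
          N.sub_mem (Submodule.orthogonalProjection N v).2 huN
        rw [Submodule.inner_left_of_mem_orthogonal hmemN hfu]
        ring
      rw [hdecomp, hvw]
      calc ⟪f - u, w⟫ ≤ ‖f - u‖ * ‖w‖ := real_inner_le_norm _ _
        _ ≤ ‖f - u‖ * (J w / m) := by
            apply mul_le_mul_of_nonneg_left _ (norm_nonneg _)
            rw [le_div_iff₀ hmpos]
            linarith [hJw]
        _ = ‖f - u‖ / m * J w := by ring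
  obtain ⟨C, hC0, hCbound⟩ := key
  refine ⟨max 1 C, lt_of_lt_of_le one_pos (le_max_left _ _), fun t ht => ?_⟩
  have ht1 : (1:ℝ) ≤ t := le_trans (le_max_left _ _) ht
  have htpos : 0 < t := lt_of_lt_of_le one_pos ht1
  have htC : C ≤ t := le_trans (le_max_right _ _) ht
  have hsub : (1 / t) • (f - u) ∈ subdiff J u := by
    intro v
    rw [hJu, real_inner_smul_left]
    have h1 := hCbound v
    have h2 : C * J v ≤ t * J v := mul_le_mul_of_nonneg_right htC (hJnn v)
    calc 0 + 1 / t * ⟪f - u, v - u⟫ ≤ 1 / t * (t * J v) := by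
          rw [zero_add]
          apply mul_le_mul_of_nonneg_left _ (by positivity : (0:ℝ) ≤ 1/t)
          linarith
      _ = J v := by field_simp
  refine ⟨hsub, ?_, ?_⟩
  · intro v
    have h := hsub v
    rw [hJu, real_inner_smul_left, zero_add] at h
    have hinner : ⟪f - u, v - u⟫ ≤ t * J v := by
      have := mul_le_mul_of_nonneg_left h (le_of_lt htpos)
      calc ⟪f - u, v - u⟫ = t * (1 / t * ⟪f - u, v - u⟫) := by field_simp
        _ ≤ t * J v := by nlinarith
    have hnorm : ‖v - f‖ ^ 2 = ‖v - u‖ ^ 2 + 2 * ⟪v - u, u - f⟫ + ‖u - f‖ ^ 2 := by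
      have : v - f = (v - u) + (u - f) := by abel
      rw [this, ← real_inner_self_eq_norm_sq, ← real_inner_self_eq_norm_sq,
        ← real_inner_self_eq_norm_sq, inner_add_add_self,
        real_inner_comm (u - f) (v - u)]
      ring
    have hflip : ⟪v - u, u - f⟫ = - ⟪f - u, v - u⟫ := by
      rw [real_inner_comm]
      rw [show u - f = -(f - u) by abel, inner_neg_left]
    rw [hJu]
    have := sq_nonneg ‖v - u‖
    linarith [hnorm, hflip, hinner]
  · intro v hv
    have h := hsub v
    rw [hJu, real_inner_smul_left, zero_add] at h
    have hinner : ⟪f - u, v - u⟫ ≤ t * J v := by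
      calc ⟪f - u, v - u⟫ = t * (1 / t * ⟪f - u, v - u⟫) := by field_simp
        _ ≤ t * J v := by nlinarith
    have hnorm : ‖v - f‖ ^ 2 = ‖v - u‖ ^ 2 + 2 * ⟪v - u, u - f⟫ + ‖u - f‖ ^ 2 := by
      have : v - f = (v - u) + (u - f) := by abel
      rw [this, ← real_inner_self_eq_norm_sq, ← real_inner_self_eq_norm_sq,
        ← real_inner_self_eq_norm_sq, inner_add_add_self,
        real_inner_comm (u - f) (v - u)]
      ring
    have hflip : ⟪v - u, u - f⟫ = - ⟪f - u, v - u⟫ := by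
      rw [real_inner_comm]
      rw [show u - f = -(f - u) by abel, inner_neg_left]
    rw [hJu] at hv
    have hvu : ‖v - u‖ ^ 2 ≤ 0 := by linarith [hv, hnorm, hflip, hinner]
    have h2 : ‖v - u‖ ^ 2 = 0 := le_antisymm hvu (sq_nonneg _)
    have h3 : ‖v - u‖ = 0 := by
      have := sq_eq_zero_iff.mp h2
      exact this
    exact sub_eq_zero.mp (norm_eq_zero.mp h3)
end

section
/- Let J : ℝ^n → ℝ be convex and absolutely one-homogeneous, let C₀ > 0 satisfy J(v) ≤ C₀·‖v‖ for all v ∈ ℝ^n, and let f ∈ ℝ^n. For t ≥ 0 let u_VM(t) denote the unique minimizer of u ↦ (1/2)·‖u − f‖² + t·J(u). Then the map t ↦ u_VM(t) is Lipschitz continuous: ‖u_VM(t) − u_VM(s)‖ ≤ C₀·|t − s| for all t, s ≥ 0. -/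
open RealInnerProductSpace

/-- Variational inequality for the minimizer of `u ↦ (1/2)‖u-f‖² + t J(u)`. -/
lemma variational_ineq_aux {n : ℕ}
    (J : EuclideanSpace ℝ (Fin n) → ℝ)
    (hconv : ConvexOn ℝ Set.univ J)
    (f : EuclideanSpace ℝ (Fin n))
    (u : EuclideanSpace ℝ (Fin n))
    (t : ℝ) (ht : 0 ≤ t)
    (hmin : ∀ w : EuclideanSpace ℝ (Fin n),
      (1 / 2) * ‖u - f‖ ^ 2 + t * J u ≤ (1 / 2) * ‖w - f‖ ^ 2 + t * J w)
    (w : EuclideanSpace ℝ (Fin n)) :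
    0 ≤ ⟪u - f, w - u⟫ + t * (J w - J u) := by
  set d := w - u with hd
  set A := ⟪u - f, w - u⟫ + t * (J w - J u) with hA
  by_contra hneg
  push_neg at hneg
  have key : ∀ l : ℝ, 0 < l → l ≤ 1 → 0 ≤ A + l / 2 * ‖d‖ ^ 2 := by
    intro l hl hl1
    have hmem : u + l • d = (1 - l) • u + l • w := by
      rw [hd]; module
    have hJ : J (u + l • d) ≤ (1 - l) * J u + l * J w := by
      rw [hmem]
      exact hconv.2 (Set.mem_univ u) (Set.mem_univ w) (by linarith) (le_of_lt hl) (by ring)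
    have hnorm : ‖u + l • d - f‖ ^ 2 = ‖u - f‖ ^ 2 + 2 * (l * ⟪u - f, d⟫) + l ^ 2 * ‖d‖ ^ 2 := by
      have : u + l • d - f = (u - f) + l • d := by abel
      rw [this, @norm_add_sq_real, real_inner_smul_right, norm_smul]
      simp [mul_pow, abs_of_pos hl]
    have h1 := hmin (u + l • d)
    have h2 : t * J (u + l • d) ≤ t * ((1 - l) * J u + l * J w) :=
      mul_le_mul_of_nonneg_left hJ ht
    nlinarith [sq_nonneg ‖d‖]
  have hd0 : 0 ≤ ‖d‖ ^ 2 := sq_nonneg _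
  rcases eq_or_lt_of_le hd0 with h0 | h0
  · have := key 1 one_pos le_rfl
    nlinarith
  · set l := min 1 (-A / ‖d‖ ^ 2) with hl
    have hlpos : 0 < l := lt_min one_pos (div_pos (neg_pos.mpr hneg) h0)
    have := key l hlpos (min_le_left _ _)
    have hle : l ≤ -A / ‖d‖ ^ 2 := min_le_right _ _
    have : l * ‖d‖ ^ 2 ≤ -A := by
      rw [div_eq_mul_inv] at hle
      calc l * ‖d‖ ^ 2 ≤ (-A * (‖d‖ ^ 2)⁻¹) * ‖d‖ ^ 2 := by nlinarith
        _ = -A := by rw [mul_assoc, inv_mul_cancel₀ h0.ne', mul_one]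
    nlinarith

/-- Lipschitz continuity of the variational solution path: if
`J v ≤ C₀ ‖v‖` for all `v` and `uVM t` is, for each `t ≥ 0`, the unique minimizer
of `u ↦ (1/2)‖u - f‖² + t J(u)`, then `‖uVM t - uVM s‖ ≤ C₀ |t - s|` for `t, s ≥ 0`. -/
theorem variational_solution_lipschitz {n : ℕ}
    (J : EuclideanSpace ℝ (Fin n) → ℝ)
    (hconv : ConvexOn ℝ Set.univ J)
    (hhom : ∀ (s : ℝ) (u : EuclideanSpace ℝ (Fin n)), J (s • u) = |s| * J u)
    (C₀ : ℝ) (hC₀ : 0 < C₀)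
    (hupper : ∀ v, J v ≤ C₀ * ‖v‖)
    (f : EuclideanSpace ℝ (Fin n))
    (uVM : ℝ → EuclideanSpace ℝ (Fin n))
    (huVM : ∀ t : ℝ, 0 ≤ t → ∀ u : EuclideanSpace ℝ (Fin n),
      (1 / 2) * ‖uVM t - f‖ ^ 2 + t * J (uVM t) ≤ (1 / 2) * ‖u - f‖ ^ 2 + t * J u) :
    ∀ t s : ℝ, 0 ≤ t → 0 ≤ s → ‖uVM t - uVM s‖ ≤ C₀ * |t - s| := by
  -- subadditivity of J
  have hsub : ∀ a b : EuclideanSpace ℝ (Fin n), J (a + b) ≤ J a + J b := by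
    intro a b
    have h2 : J (a + b) = 2 * J ((1/2 : ℝ) • (a + b)) := by
      rw [hhom]
      rw [abs_of_pos (by norm_num : (0:ℝ) < 1/2)]
      ring
    have hc : J ((1/2 : ℝ) • a + (1/2 : ℝ) • b) ≤ (1/2) * J a + (1/2) * J b :=
      hconv.2 (Set.mem_univ a) (Set.mem_univ b) (by norm_num) (by norm_num) (by norm_num)
    have : (1/2 : ℝ) • (a + b) = (1/2 : ℝ) • a + (1/2 : ℝ) • b := by module
    rw [h2, this]
    linarith
  -- J is C₀-Lipschitz (as consequence of subadditivity and the upper bound)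
  have hlip : ∀ a b : EuclideanSpace ℝ (Fin n), J a - J b ≤ C₀ * ‖a - b‖ := by
    intro a b
    have := hsub (a - b) b
    simp only [sub_add_cancel] at this
    have h2 := hupper (a - b)
    linarith
  intro t s ht hs
  set u := uVM t with hu
  set v := uVM s with hv
  have h1 := variational_ineq_aux J hconv f u t ht (huVM t ht) v
  have h2 := variational_ineq_aux J hconv f v s hs (huVM s hs) u
  -- sum of inner products equals -‖u - v‖²
  have hsum : ⟪u - f, v - u⟫ + ⟪v - f, u - v⟫ = -‖u - v‖ ^ 2 := by
    have e1 : ⟪v - f, u - v⟫ = -⟪v - f, v - u⟫ := by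
      rw [← inner_neg_right]; congr 1; abel
    rw [e1]
    have e2 : ⟪u - f, v - u⟫ - ⟪v - f, v - u⟫ = ⟪u - v, v - u⟫ := by
      rw [← inner_sub_left]; congr 1; abel
    have e3 : ⟪u - v, v - u⟫ = -⟪u - v, u - v⟫ := by
      rw [← inner_neg_right]; congr 1; abel
    rw [sub_eq_add_neg] at e2
    rw [e2, e3, real_inner_self_eq_norm_sq]
  have hkey : ‖u - v‖ ^ 2 ≤ (t - s) * (J v - J u) := by nlinarith
  have habs : (t - s) * (J v - J u) ≤ |t - s| * (C₀ * ‖u - v‖) := by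
    have h3 : J v - J u ≤ C₀ * ‖v - u‖ := hlip v u
    have h4 : J u - J v ≤ C₀ * ‖u - v‖ := hlip u v
    have hn : ‖v - u‖ = ‖u - v‖ := norm_sub_rev v u
    rw [hn] at h3
    have habs1 : |J v - J u| ≤ C₀ * ‖u - v‖ := abs_le.mpr ⟨by linarith, h3⟩
    calc (t - s) * (J v - J u) ≤ |(t - s) * (J v - J u)| := le_abs_self _
      _ = |t - s| * |J v - J u| := abs_mul _ _
      _ ≤ |t - s| * (C₀ * ‖u - v‖) :=
        mul_le_mul_of_nonneg_left habs1 (abs_nonneg _)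
  have hfinal : ‖u - v‖ ^ 2 ≤ (C₀ * |t - s|) * ‖u - v‖ := by
    calc ‖u - v‖ ^ 2 ≤ (t - s) * (J v - J u) := hkey
      _ ≤ |t - s| * (C₀ * ‖u - v‖) := habs
      _ = (C₀ * |t - s|) * ‖u - v‖ := by ring
  rcases eq_or_lt_of_le (norm_nonneg (u - v)) with h0 | h0
  · rw [← h0]
    positivity
  · have := mul_le_mul_of_nonneg_right (le_refl (‖u - v‖)) (le_of_lt h0)
    nlinarith
end

section
/- Let J : ℝ^n → ℝ be convex and absolutely one-homogeneous, let N(J) = {u : J(u) = 0}, and let c₀ > 0 satisfy c₀·‖w‖ ≤ J(w) for all w ∈ N(J)^⊥. Let f ∈ ℝ^n and let u : [0, ∞) → ℝ^n be Lipschitz continuous with u(0) = f such that for almost every t > 0, u is differentiable at t with −u'(t) ∈ ∂J(u(t)) (the gradient flow of J). Then P₀(u(t)) = P₀(f) for all t ≥ 0, ‖Q₀(u(t))‖ ≤ ‖Q₀(f)‖ − c₀·t whenever Q₀(u(s)) ≠ 0 for all s ≤ t, and u(t) = P₀(f) for all t ≥ ‖Q₀(f)‖/c₀ (finite time extinction).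 -/
open Set MeasureTheory Filter Topology

lemma sub_le_of_ae_deriv_le {g : ℝ → ℝ} {a b C L : ℝ} (hL : 0 ≤ L) (hab : a ≤ b)
    (hg : ∀ x ∈ Icc a b, ∀ y ∈ Icc a b, |g y - g x| ≤ L * |y - x|)
    (hd : ∀ᵐ t ∂volume, t ∈ Ioo a b → ∃ g', HasDerivAt g g' t ∧ g' ≤ C) :
    g b - g a ≤ C * (b - a) := by
  classical
  have hcont : ContinuousOn g (Icc a b) := by
    have : LipschitzOnWith L.toNNReal g (Icc a b) := by
      rw [lipschitzOnWith_iff_dist_le_mul]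
      intro x hx y hy
      rw [Real.dist_eq, Real.dist_eq, Real.coe_toNNReal L hL]
      exact hg y hy x hx
    exact this.continuousOn
  have key : ∀ ε : ℝ, 0 < ε → g b - g a ≤ (C + ε) * (b - a) + (L + |C| + 1) * ε := by
    intro ε hε
    set K : ℝ := L + |C| + 1 with hKdef
    have hK0 : 0 < K := by have := abs_nonneg C; linarith
    set Q : ℝ → Prop := fun t => ∃ g', HasDerivAt g g' t ∧ g' ≤ C with hQdef
    have hE0 : volume {t | t ∈ Ioo a b ∧ ¬ Q t} = 0 := by
      have h := ae_iff.1 hd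
      simpa only [Classical.not_imp] using h
    set E : Set ℝ := insert a {t | t ∈ Ioo a b ∧ ¬ Q t} with hEdef
    have hEnull : volume E = 0 := by
      refine le_antisymm ?_ zero_le
      calc volume E ≤ volume ({a} : Set ℝ) + volume {t | t ∈ Ioo a b ∧ ¬ Q t} := by
            rw [hEdef, Set.insert_eq]; exact measure_union_le _ _
        _ = 0 := by rw [hE0, Real.volume_singleton, add_zero]
    have hE : volume E < ENNReal.ofReal ε := by
      rw [hEnull]; exact ENNReal.ofReal_pos.2 hε
    obtain ⟨U, hEU, hUo, hUε⟩ := Set.exists_isOpen_lt_of_lt E _ hE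
    set m : ℝ → ℝ := fun x => (volume (Ioc a x ∩ U)).toReal with hmdef
    have hfin : ∀ x, volume (Ioc a x ∩ U) ≠ ⊤ := fun x =>
      ((measure_mono inter_subset_right).trans_lt (hUε.trans ENNReal.ofReal_lt_top)).ne
    have hmono : Monotone m := by
      intro x y hxy
      exact ENNReal.toReal_mono (hfin y)
        (measure_mono (inter_subset_inter (Ioc_subset_Ioc_right hxy) Subset.rfl))
    have hm_lip : ∀ x y, a ≤ x → x ≤ y → m y ≤ m x + (y - x) := by
      intro x y hax hxy
      have hdecomp : Ioc a y ∩ U ⊆ (Ioc a x ∩ U) ∪ Ioc x y := by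
        intro z hz; rcases le_or_gt z x with h | h
        · exact Or.inl ⟨⟨hz.1.1, h⟩, hz.2⟩
        · exact Or.inr ⟨h, hz.1.2⟩
      have h1 := (measure_mono hdecomp).trans (measure_union_le (μ := volume) (Ioc a x ∩ U) (Ioc x y))
      rw [Real.volume_Ioc] at h1
      calc m y ≤ (volume (Ioc a x ∩ U) + ENNReal.ofReal (y - x)).toReal :=
            ENNReal.toReal_mono (ENNReal.add_ne_top.2 ⟨hfin x, ENNReal.ofReal_ne_top⟩) h1
        _ = m x + (y - x) := by
            rw [ENNReal.toReal_add (hfin x) ENNReal.ofReal_ne_top,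
              ENNReal.toReal_ofReal (by linarith)]
    have hm_ge : ∀ x y, a ≤ x → x ≤ y → Ioc x y ⊆ U → m x + (y - x) ≤ m y := by
      intro x y hax hxy hsub
      have hdisj : Disjoint (Ioc a x ∩ U) (Ioc x y) := by
        rw [Set.disjoint_left]
        rintro z ⟨hz1, _⟩ hz2
        exact absurd hz2.1 (not_lt.2 hz1.2)
      have hunion : (Ioc a x ∩ U) ∪ Ioc x y ⊆ Ioc a y ∩ U := by
        rintro z (⟨hz, hzU⟩ | hz)
        · exact ⟨⟨hz.1, hz.2.trans hxy⟩, hzU⟩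
        · exact ⟨⟨lt_of_le_of_lt hax hz.1, hz.2⟩, hsub hz⟩
      have hmeas : volume ((Ioc a x ∩ U) ∪ Ioc x y) = volume (Ioc a x ∩ U) + volume (Ioc x y) :=
        measure_union (μ := volume) hdisj measurableSet_Ioc
      have h1 := measure_mono (μ := volume) hunion
      rw [hmeas] at h1
      have h2 := ENNReal.toReal_mono (hfin y) h1
      rwa [ENNReal.toReal_add (hfin x) (by simp), Real.volume_Ioc,
        ENNReal.toReal_ofReal (by linarith)] at h2
    have hm_a : m a = 0 := by simp [hmdef]
    have hmcont : ContinuousOn m (Icc a b) := by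
      have : LipschitzOnWith 1 m (Icc a b) := by
        rw [lipschitzOnWith_iff_dist_le_mul]
        intro x hx y hy
        rw [Real.dist_eq, Real.dist_eq, NNReal.coe_one, one_mul]
        rcases le_total x y with h | h
        · rw [abs_of_nonpos (sub_nonpos.2 (hmono h)), abs_of_nonpos (sub_nonpos.2 h)]
          linarith [hm_lip x y hx.1 h]
        · rw [abs_of_nonneg (sub_nonneg.2 (hmono h)), abs_of_nonneg (sub_nonneg.2 h)]
          linarith [hm_lip y x hy.1 h]
      exact this.continuousOn
    set f : ℝ → ℝ := fun x => g x - K * m x with hfdef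
    set f' : ℝ → ℝ := fun x => if x ∈ U then L - K else C with hf'def
    have hfcont : ContinuousOn f (Icc a b) := hcont.sub (continuousOn_const.mul hmcont)
    have hB : ∀ x : ℝ, HasDerivAt (fun y => g a + (C + ε) * (y - a)) (C + ε) x := by
      intro x
      simpa using (((hasDerivAt_id x).sub_const a).const_mul (C + ε)).const_add (g a)
    have hbound : ∀ x ∈ Ico a b, f x = g a + (C + ε) * (x - a) → f' x < C + ε := by
      intro x _ _
      by_cases hx : x ∈ U
      · rw [hf'def]; simp only [if_pos hx, hKdef]
        have := neg_abs_le C; linarith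
      · rw [hf'def]; simp only [if_neg hx]; linarith
    have hf'slope : ∀ x ∈ Ico a b, ∀ r, f' x < r → ∃ᶠ z in 𝓝[>] x, slope f x z < r := by
      intro x hx r hr
      by_cases hxU : x ∈ U
      · rw [hf'def] at hr; simp only [if_pos hxU] at hr
        obtain ⟨δ, hδ0, hδ⟩ := Metric.isOpen_iff.1 hUo x hxU
        have hmem : Ioo x (min (x + δ) b) ∈ 𝓝[>] x :=
          Ioo_mem_nhdsGT_of_mem ⟨le_rfl, lt_min (by linarith) hx.2⟩
        refine (Filter.eventually_of_mem hmem ?_).frequently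
        intro z hz
        have hxz : x < z := hz.1
        have hzb : z ≤ b := le_of_lt (lt_of_lt_of_le hz.2 (min_le_right _ _))
        have hsubU : Ioc x z ⊆ U := by
          intro w hw
          apply hδ
          rw [Metric.mem_ball, Real.dist_eq, abs_of_pos (sub_pos.2 hw.1)]
          have h1 : z < x + δ := lt_of_lt_of_le hz.2 (min_le_left _ _)
          linarith [hw.2]
        have hge := hm_ge x z hx.1 hxz.le hsubU
        have hgb := hg x (Ico_subset_Icc_self hx) z ⟨le_trans hx.1 hxz.le, hzb⟩
        rw [slope_def_field, div_lt_iff₀ (sub_pos.2 hxz)]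
        have h1 : g z - g x ≤ L * (z - x) := by
          have := le_abs_self (g z - g x)
          rw [abs_of_pos (sub_pos.2 hxz)] at hgb
          linarith
        have h2 : K * (m x + (z - x)) ≤ K * m z := mul_le_mul_of_nonneg_left hge hK0.le
        have hfx : f z - f x = (g z - g x) - K * (m z - m x) := by
          simp only [hfdef]; ring
        nlinarith [sub_pos.2 hxz]
      · have hxE : x ∉ E := fun h => hxU (hEU h)
        have hxa : x ≠ a := by
          intro h
          exact hxE (by rw [hEdef, h]; exact mem_insert _ _)
        have hxIoo : x ∈ Ioo a b := ⟨lt_of_le_of_ne hx.1 (Ne.symm hxa), hx.2⟩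
        have hQ : Q x := by
          by_contra hq
          exact hxE (mem_insert_of_mem _ ⟨hxIoo, hq⟩)
        obtain ⟨g', hg', hg'C⟩ := hQ
        rw [hf'def] at hr; simp only [if_neg hxU] at hr
        have htend : Tendsto (slope g x) (𝓝[>] x) (𝓝 g') :=
          (hasDerivAt_iff_tendsto_slope.1 hg').mono_left
            (nhdsWithin_mono x fun z hz => ne_of_gt hz)
        have hev : ∀ᶠ z in 𝓝[>] x, slope g x z < r :=
          htend.eventually_lt_const (lt_of_le_of_lt hg'C hr)
        refine ((hev.and self_mem_nhdsWithin).mono ?_).frequently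
        rintro z ⟨hslope, hz⟩
        have hxz : x < z := hz
        have hm0 : 0 ≤ m z - m x := sub_nonneg.2 (hmono hxz.le)
        rw [slope_def_field] at hslope ⊢
        have hle : f z - f x ≤ g z - g x := by
          simp only [hfdef]
          nlinarith
        calc (f z - f x) / (z - x) ≤ (g z - g x) / (z - x) :=
              (div_le_div_iff_of_pos_right (sub_pos.2 hxz)).2 hle
          _ < r := hslope
    have hfb := image_le_of_liminf_slope_right_lt_deriv_boundary hfcont hf'slope
      (by simp [hfdef, hm_a]) hB hbound (right_mem_Icc.2 hab)
    have hmb : m b ≤ ε := by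
      have h1 : volume (Ioc a b ∩ U) ≤ ENNReal.ofReal ε :=
        le_of_lt (lt_of_le_of_lt (measure_mono inter_subset_right) hUε)
      calc m b ≤ (ENNReal.ofReal ε).toReal := ENNReal.toReal_mono ENNReal.ofReal_ne_top h1
        _ = ε := ENNReal.toReal_ofReal hε.le
    simp only [hfdef] at hfb
    nlinarith [mul_le_mul_of_nonneg_left hmb hK0.le]
  refine le_of_forall_pos_le_add fun δ hδ => ?_
  have hD : 0 < b - a + (L + |C| + 1) := by have := abs_nonneg C; linarith
  have h1 := key (δ / (b - a + (L + |C| + 1))) (div_pos hδ hD)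
  have hcalc : (C + δ / (b - a + (L + |C| + 1))) * (b - a)
      + (L + |C| + 1) * (δ / (b - a + (L + |C| + 1))) = C * (b - a) + δ := by
    field_simp
    ring
  linarith [hcalc ▸ h1]


open RealInnerProductSpace

/-- Finite time extinction of the gradient flow: for the gradient
flow `u' ∈ -∂J(u)`, `u(0) = f`, the nullspace component is conserved,
`‖Q₀(u t)‖` decreases at rate at least `c₀`, and `u t = P₀ f` for
`t ≥ ‖Q₀ f‖ / c₀`.  Here `P₀` is the orthogonal projection onto `N(J)` and
`Q₀ = Id - P₀`. -/
theorem gradient_flow_finite_time_extinction {n : ℕ}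
    (J : EuclideanSpace ℝ (Fin n) → ℝ)
    (hconv : ConvexOn ℝ Set.univ J)
    (hhom : ∀ (s : ℝ) (u : EuclideanSpace ℝ (Fin n)), J (s • u) = |s| * J u)
    (N : Submodule ℝ (EuclideanSpace ℝ (Fin n)))
    (hN : (N : Set (EuclideanSpace ℝ (Fin n))) = {u | J u = 0})
    (c₀ : ℝ) (hc₀ : 0 < c₀)
    (hlower : ∀ w ∈ Nᗮ, c₀ * ‖w‖ ≤ J w)
    (f : EuclideanSpace ℝ (Fin n))
    (u : ℝ → EuclideanSpace ℝ (Fin n))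
    (hLip : ∃ L : NNReal, LipschitzOnWith L u (Set.Ici (0 : ℝ)))
    (hu0 : u 0 = f)
    (hflow : ∀ᵐ t ∂(MeasureTheory.volume), 0 < t →
      ∃ u' : EuclideanSpace ℝ (Fin n), HasDerivAt u u' t ∧ -u' ∈ subdiff J (u t)) :
    (∀ t : ℝ, 0 ≤ t →
      (Submodule.orthogonalProjectionOnto N (u t) : EuclideanSpace ℝ (Fin n)) =
        (Submodule.orthogonalProjectionOnto N f : EuclideanSpace ℝ (Fin n))) ∧
    (∀ t : ℝ, 0 ≤ t →
      (∀ s : ℝ, 0 ≤ s → s ≤ t →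
        u s - (Submodule.orthogonalProjectionOnto N (u s) : EuclideanSpace ℝ (Fin n)) ≠ 0) →
      ‖u t - (Submodule.orthogonalProjectionOnto N (u t) : EuclideanSpace ℝ (Fin n))‖ ≤
        ‖f - (Submodule.orthogonalProjectionOnto N f : EuclideanSpace ℝ (Fin n))‖ - c₀ * t) ∧
    (∀ t : ℝ, ‖f - (Submodule.orthogonalProjectionOnto N f : EuclideanSpace ℝ (Fin n))‖ / c₀ ≤ t →
      u t = (Submodule.orthogonalProjectionOnto N f : EuclideanSpace ℝ (Fin n))) := by
  classical
  obtain ⟨L, hL⟩ := hLip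
  have hLc : (0:ℝ) ≤ (L:ℝ) := L.coe_nonneg
  -- basic facts about J
  have hJ0 : J 0 = 0 := by simpa using hhom 0 0
  have hJneg : ∀ x, J (-x) = J x := fun x => by simpa using hhom (-1) x
  have hJadd : ∀ x y, J (x + y) ≤ J x + J y := by
    intro x y
    have h := hconv.2 (Set.mem_univ x) (Set.mem_univ y)
      (by norm_num : (0:ℝ) ≤ 1/2) (by norm_num : (0:ℝ) ≤ 1/2) (by norm_num)
    have h2 : J ((1/2 : ℝ) • x + (1/2 : ℝ) • y) = (1/2) * J (x + y) := by
      rw [← smul_add, hhom]; norm_num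
    rw [h2] at h; simp only [smul_eq_mul] at h; linarith
  have hJnonneg : ∀ x, 0 ≤ J x := by
    intro x
    have h := hJadd x (-x)
    rw [add_neg_cancel, hJ0, hJneg] at h
    linarith
  have hJN : ∀ w, w ∈ N → J w = 0 := by
    intro w hw
    have : w ∈ {u | J u = 0} := hN ▸ hw
    exact this
  -- subdifferential facts
  have hsub_w : ∀ x p, p ∈ subdiff J x → ∀ w, w ∈ N → ⟪p, w⟫ = 0 := by
    intro x p hp w hw
    have h1 : ∀ w', w' ∈ N → ⟪p, w'⟫ ≤ 0 := by
      intro w' hw'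
      have h := hp (x + w')
      rw [add_sub_cancel_left] at h
      have hxw : J (x + w') ≤ J x := by
        have := hJadd x w'
        rw [hJN w' hw'] at this
        linarith
      linarith
    have h2 := h1 w hw
    have h3 := h1 (-w) (N.neg_mem hw)
    rw [inner_neg_right] at h3
    linarith
  have hsub_x : ∀ x p, p ∈ subdiff J x → J x ≤ ⟪p, x⟫ := by
    intro x p hp
    have h := hp 0
    rw [zero_sub, inner_neg_right, hJ0] at h
    linarith
  -- statement 1
  have key1 : ∀ t : ℝ, 0 ≤ t →
      (Submodule.orthogonalProjectionOnto N (u t) : EuclideanSpace ℝ (Fin n)) =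
        (Submodule.orthogonalProjectionOnto N f : EuclideanSpace ℝ (Fin n)) := by
    intro t ht
    have hconst : ∀ w, w ∈ N → ⟪u t, w⟫ = ⟪f, w⟫ := by
      intro w hw
      rcases eq_or_lt_of_le ht with h | h
      · rw [← h, hu0]
      have hglip : ∀ x ∈ Set.Icc (0:ℝ) t, ∀ y ∈ Set.Icc (0:ℝ) t,
          |(fun s => ⟪u s, w⟫) y - (fun s => ⟪u s, w⟫) x| ≤ ((L:ℝ) * ‖w‖) * |y - x| := by
        intro x hx y hy
        have h1 : ⟪u y, w⟫ - ⟪u x, w⟫ = ⟪u y - u x, w⟫ := by rw [inner_sub_left]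
        simp only []
        rw [h1]
        calc |⟪u y - u x, w⟫| ≤ ‖u y - u x‖ * ‖w‖ := abs_real_inner_le_norm _ _
          _ ≤ ((L:ℝ) * |y - x|) * ‖w‖ := by
              have := hL.dist_le_mul y (Set.mem_Ici.2 hy.1) x (Set.mem_Ici.2 hx.1)
              rw [dist_eq_norm, Real.dist_eq] at this
              exact mul_le_mul_of_nonneg_right this (norm_nonneg w)
          _ = ((L:ℝ) * ‖w‖) * |y - x| := by ring
      have hae : ∀ᵐ s ∂MeasureTheory.volume, s ∈ Set.Ioo (0:ℝ) t →
          ∃ g', HasDerivAt (fun s => ⟪u s, w⟫) g' s ∧ g' ≤ 0 := by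
        filter_upwards [hflow] with s hs hsmem
        obtain ⟨u', hd, hpsub⟩ := hs hsmem.1
        have hinner := HasDerivAt.inner ℝ hd (hasDerivAt_const s w)
        simp only [inner_zero_right, zero_add] at hinner
        refine ⟨⟪u', w⟫, hinner, ?_⟩
        have := hsub_w (u s) (-u') hpsub w hw
        rw [inner_neg_left] at this
        linarith
      have haen : ∀ᵐ s ∂MeasureTheory.volume, s ∈ Set.Ioo (0:ℝ) t →
          ∃ g', HasDerivAt (fun s => -⟪u s, w⟫) g' s ∧ g' ≤ 0 := by
        filter_upwards [hflow] with s hs hsmem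
        obtain ⟨u', hd, hpsub⟩ := hs hsmem.1
        have hinner := HasDerivAt.inner ℝ hd (hasDerivAt_const s w)
        simp only [inner_zero_right, zero_add] at hinner
        refine ⟨-⟪u', w⟫, hinner.neg, ?_⟩
        have := hsub_w (u s) (-u') hpsub w hw
        rw [inner_neg_left] at this
        linarith
      have hgnlip : ∀ x ∈ Set.Icc (0:ℝ) t, ∀ y ∈ Set.Icc (0:ℝ) t,
          |(fun s => -⟪u s, w⟫) y - (fun s => -⟪u s, w⟫) x| ≤ ((L:ℝ) * ‖w‖) * |y - x| := by
        intro x hx y hy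
        have h := hglip x hx y hy
        simp only [] at h ⊢
        have he : (-⟪u y, w⟫) - (-⟪u x, w⟫) = -(⟪u y, w⟫ - ⟪u x, w⟫) := by ring
        rw [he, abs_neg]
        exact h
      have h1 := sub_le_of_ae_deriv_le (mul_nonneg hLc (norm_nonneg w)) ht hglip hae
      have h2 := sub_le_of_ae_deriv_le (mul_nonneg hLc (norm_nonneg w)) ht hgnlip haen
      simp only [zero_mul, mul_zero] at h1 h2
      have : ⟪u t, w⟫ = ⟪u 0, w⟫ := by linarith
      rw [this, hu0]
    have horth : u t - f ∈ Nᗮ := by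
      rw [Submodule.mem_orthogonal]
      intro w hw
      rw [inner_sub_right, real_inner_comm (u t) w, real_inner_comm f w, hconst w hw, sub_self]
    have hz := Submodule.orthogonalProjectionOnto_apply_of_mem_orthogonal horth
    rw [map_sub, sub_eq_zero] at hz
    exact congrArg Subtype.val hz
  -- statement 2
  have key2 : ∀ t : ℝ, 0 ≤ t →
      (∀ s : ℝ, 0 ≤ s → s ≤ t →
        u s - (Submodule.orthogonalProjectionOnto N (u s) : EuclideanSpace ℝ (Fin n)) ≠ 0) →
      ‖u t - (Submodule.orthogonalProjectionOnto N (u t) : EuclideanSpace ℝ (Fin n))‖ ≤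
        ‖f - (Submodule.orthogonalProjectionOnto N f : EuclideanSpace ℝ (Fin n))‖ - c₀ * t := by
    intro t ht hne
    set Pf : EuclideanSpace ℝ (Fin n) := (Submodule.orthogonalProjectionOnto N f : EuclideanSpace ℝ (Fin n))
      with hPfdef
    have hPfN : Pf ∈ N := SetLike.coe_mem _
    rcases eq_or_lt_of_le ht with h | h
    · rw [← h, key1 0 le_rfl, hu0]
      simp
    have hglip : ∀ x ∈ Set.Icc (0:ℝ) t, ∀ y ∈ Set.Icc (0:ℝ) t,
        |(fun s => ‖u s - Pf‖) y - (fun s => ‖u s - Pf‖) x| ≤ (L:ℝ) * |y - x| := by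
      intro x hx y hy
      simp only []
      calc |‖u y - Pf‖ - ‖u x - Pf‖| ≤ ‖(u y - Pf) - (u x - Pf)‖ := abs_norm_sub_norm_le _ _
        _ = ‖u y - u x‖ := by rw [sub_sub_sub_cancel_right]
        _ ≤ (L:ℝ) * |y - x| := by
            have := hL.dist_le_mul y (Set.mem_Ici.2 hy.1) x (Set.mem_Ici.2 hx.1)
            rwa [dist_eq_norm, Real.dist_eq] at this
    have hae : ∀ᵐ s ∂MeasureTheory.volume, s ∈ Set.Ioo (0:ℝ) t →
        ∃ g', HasDerivAt (fun s => ‖u s - Pf‖) g' s ∧ g' ≤ -c₀ := by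
      filter_upwards [hflow] with s hs hsmem
      obtain ⟨u', hd, hpsub⟩ := hs hsmem.1
      set r : EuclideanSpace ℝ (Fin n) := u s - Pf with hrdef
      have hreq : r = u s - (Submodule.orthogonalProjectionOnto N (u s) : EuclideanSpace ℝ (Fin n)) := by
        rw [hrdef, key1 s hsmem.1.le]
      have hrne : r ≠ 0 := by rw [hreq]; exact hne s hsmem.1.le hsmem.2.le
      have hrnorm : 0 < ‖r‖ := norm_pos_iff.2 hrne
      -- inner bound
      have hinnerb : c₀ * ‖r‖ ≤ ⟪-u', r⟫ := by
        have h1 : ⟪-u', r⟫ = ⟪-u', u s⟫ - ⟪-u', Pf⟫ := by rw [hrdef, inner_sub_right]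
        have h2 : ⟪-u', Pf⟫ = 0 := hsub_w (u s) (-u') hpsub Pf hPfN
        have h3 : J (u s) ≤ ⟪-u', u s⟫ := hsub_x (u s) (-u') hpsub
        have h4 : J r ≤ J (u s) := by
          have h5 := hJadd (u s) (-(Submodule.orthogonalProjectionOnto N (u s) : EuclideanSpace ℝ (Fin n)))
          rw [hJneg, hJN _ (SetLike.coe_mem _), add_zero] at h5
          rw [hreq, sub_eq_add_neg]
          exact h5
        have h6 : c₀ * ‖r‖ ≤ J r := by
          apply hlower
          rw [hreq]
          exact Submodule.sub_starProjection_mem_orthogonal _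
        rw [h1, h2, sub_zero]
        linarith
      have hdr : HasDerivAt (fun s => u s - Pf) u' s := hd.sub_const Pf
      have hinner : HasDerivAt (fun y => ⟪u y - Pf, u y - Pf⟫) (⟪r, u'⟫ + ⟪u', r⟫) s :=
        HasDerivAt.inner ℝ hdr hdr
      have hS : ⟪r, r⟫ ≠ 0 := fun hc => hrne (inner_self_eq_zero.1 hc)
      have hsqrt := (Real.hasDerivAt_sqrt hS).comp s hinner
      have hfun : (Real.sqrt ∘ fun y => ⟪u y - Pf, u y - Pf⟫) = fun y => ‖u y - Pf‖ := by
        funext y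
        simp only [Function.comp_apply, real_inner_self_eq_norm_sq]
        exact Real.sqrt_sq (norm_nonneg _)
      rw [hfun] at hsqrt
      refine ⟨_, hsqrt, ?_⟩
      have hsq : Real.sqrt ⟪r, r⟫ = ‖r‖ := by
        rw [real_inner_self_eq_norm_sq]; exact Real.sqrt_sq (norm_nonneg _)
      rw [hsq]
      have hcomm : ⟪r, u'⟫ = ⟪u', r⟫ := real_inner_comm _ _
      have hub : ⟪u', r⟫ ≤ -(c₀ * ‖r‖) := by
        have : ⟪-u', r⟫ = -⟪u', r⟫ := by rw [inner_neg_left]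
        linarith [hinnerb, this ▸ hinnerb]
      rw [div_mul_eq_mul_div, div_le_iff₀ (by positivity)]
      calc 1 * (⟪r, u'⟫ + ⟪u', r⟫) = 2 * ⟪u', r⟫ := by rw [hcomm]; ring
        _ ≤ 2 * (-(c₀ * ‖r‖)) := by linarith
        _ = -c₀ * (2 * ‖r‖) := by ring
    have h1 := sub_le_of_ae_deriv_le hLc ht hglip hae
    simp only [hu0, sub_zero] at h1
    rw [key1 t ht]
    linarith
  -- monotonicity of the squared distance
  have hmono : ∀ s t : ℝ, 0 ≤ s → s ≤ t →
      ⟪u t - (Submodule.orthogonalProjectionOnto N f : EuclideanSpace ℝ (Fin n)),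
        u t - (Submodule.orthogonalProjectionOnto N f : EuclideanSpace ℝ (Fin n))⟫ ≤
      ⟪u s - (Submodule.orthogonalProjectionOnto N f : EuclideanSpace ℝ (Fin n)),
        u s - (Submodule.orthogonalProjectionOnto N f : EuclideanSpace ℝ (Fin n))⟫ := by
    intro s t hs hst
    set Pf : EuclideanSpace ℝ (Fin n) := (Submodule.orthogonalProjectionOnto N f : EuclideanSpace ℝ (Fin n))
      with hPfdef
    set M : ℝ := ‖f - Pf‖ + (L:ℝ) * t with hMdef
    have hM0 : 0 ≤ M := by
      rw [hMdef]
      exact add_nonneg (norm_nonneg _) (mul_nonneg hLc (hs.trans hst))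
    have hbd : ∀ x ∈ Set.Icc s t, ‖u x - Pf‖ ≤ M := by
      intro x hx
      have hx0 : (0:ℝ) ≤ x := hs.trans hx.1
      calc ‖u x - Pf‖ ≤ ‖u x - u 0‖ + ‖u 0 - Pf‖ := norm_sub_le_norm_sub_add_norm_sub _ _ _
        _ ≤ M := by
            have h2 := hL.dist_le_mul x (Set.mem_Ici.2 hx0) 0 (Set.mem_Ici.2 le_rfl)
            rw [dist_eq_norm, Real.dist_eq, sub_zero] at h2
            have h3 : |x| ≤ t := by rw [abs_of_nonneg hx0]; exact hx.2
            have h4 : ‖u x - u 0‖ ≤ (L:ℝ) * t := h2.trans (by nlinarith)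
            rw [hu0] at h4
            rw [hMdef, hu0]
            linarith
    have hident : ∀ A B : EuclideanSpace ℝ (Fin n), ⟪A, A⟫ - ⟪B, B⟫ = ⟪A - B, A + B⟫ := by
      intro A B
      rw [inner_sub_left, inner_add_right, inner_add_right, real_inner_comm B A]
      ring
    have hhlip : ∀ x ∈ Set.Icc s t, ∀ y ∈ Set.Icc s t,
        |(fun σ => ⟪u σ - Pf, u σ - Pf⟫) y - (fun σ => ⟪u σ - Pf, u σ - Pf⟫) x|
          ≤ ((L:ℝ) * (2 * M)) * |y - x| := by
      intro x hx y hy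
      simp only []
      rw [hident (u y - Pf) (u x - Pf)]
      calc |⟪(u y - Pf) - (u x - Pf), (u y - Pf) + (u x - Pf)⟫|
            ≤ ‖(u y - Pf) - (u x - Pf)‖ * ‖(u y - Pf) + (u x - Pf)‖ :=
              abs_real_inner_le_norm _ _
        _ ≤ ((L:ℝ) * |y - x|) * (2 * M) := by
            apply mul_le_mul
            · have h5 := hL.dist_le_mul y (Set.mem_Ici.2 (hs.trans hy.1)) x
                (Set.mem_Ici.2 (hs.trans hx.1))
              rw [dist_eq_norm, Real.dist_eq] at h5
              calc ‖(u y - Pf) - (u x - Pf)‖ = ‖u y - u x‖ := by rw [sub_sub_sub_cancel_right]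
                _ ≤ (L:ℝ) * |y - x| := h5
            · calc ‖(u y - Pf) + (u x - Pf)‖ ≤ ‖u y - Pf‖ + ‖u x - Pf‖ := norm_add_le _ _
                _ ≤ 2 * M := by linarith [hbd y hy, hbd x hx]
            · exact norm_nonneg _
            · positivity
        _ = ((L:ℝ) * (2 * M)) * |y - x| := by ring
    have hae : ∀ᵐ σ ∂MeasureTheory.volume, σ ∈ Set.Ioo s t →
        ∃ g', HasDerivAt (fun σ => ⟪u σ - Pf, u σ - Pf⟫) g' σ ∧ g' ≤ 0 := by
      filter_upwards [hflow] with σ hσ hσmem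
      obtain ⟨u', hd, hpsub⟩ := hσ (lt_of_le_of_lt hs hσmem.1)
      have hdr : HasDerivAt (fun y => u y - Pf) u' σ := hd.sub_const Pf
      have hinner : HasDerivAt (fun y => ⟪u y - Pf, u y - Pf⟫)
          (⟪u σ - Pf, u'⟫ + ⟪u', u σ - Pf⟫) σ := HasDerivAt.inner ℝ hdr hdr
      refine ⟨_, hinner, ?_⟩
      have h2 : ⟪-u', Pf⟫ = 0 := hsub_w (u σ) (-u') hpsub Pf (SetLike.coe_mem _)
      have h3 : J (u σ) ≤ ⟪-u', u σ⟫ := hsub_x (u σ) (-u') hpsub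
      have h4 : 0 ≤ ⟪-u', u σ - Pf⟫ := by
        rw [inner_sub_right, h2, sub_zero]
        exact (hJnonneg (u σ)).trans h3
      rw [inner_neg_left] at h4
      have hcomm : ⟪u σ - Pf, u'⟫ = ⟪u', u σ - Pf⟫ := real_inner_comm _ _
      linarith
    have h1 := sub_le_of_ae_deriv_le (by positivity) hst hhlip hae
    simp only [zero_mul] at h1
    linarith
  refine ⟨key1, key2, ?_⟩
  -- statement 3
  intro t hT
  set Pf : EuclideanSpace ℝ (Fin n) := (Submodule.orthogonalProjectionOnto N f : EuclideanSpace ℝ (Fin n))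
    with hPfdef
  set T : ℝ := ‖f - Pf‖ / c₀ with hTdef
  have hT0 : 0 ≤ T := div_nonneg (norm_nonneg _) hc₀.le
  have ht0 : 0 ≤ t := hT0.trans hT
  have hex : ∃ t₀, 0 ≤ t₀ ∧ t₀ ≤ T ∧ u t₀ - Pf = 0 := by
    by_contra hcon
    push_neg at hcon
    have hne : ∀ s : ℝ, 0 ≤ s → s ≤ T →
        u s - (Submodule.orthogonalProjectionOnto N (u s) : EuclideanSpace ℝ (Fin n)) ≠ 0 := by
      intro s hs hsT
      rw [key1 s hs]
      exact hcon s hs hsT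
    have h2 := key2 T hT0 hne
    rw [key1 T hT0] at h2
    have hTeq : c₀ * T = ‖f - Pf‖ := by
      rw [hTdef]; field_simp
    have h3 : ‖u T - Pf‖ ≤ 0 := by linarith
    have h4 : u T - Pf = 0 := by
      rw [← norm_le_zero_iff]; exact h3
    exact hcon T hT0 le_rfl h4
  obtain ⟨t₀, ht₀0, ht₀T, ht₀⟩ := hex
  have hm := hmono t₀ t ht₀0 (ht₀T.trans hT)
  rw [ht₀, inner_zero_left] at hm
  have hnn : (0:ℝ) ≤ ⟪u t - Pf, u t - Pf⟫ := real_inner_self_nonneg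
  have hz : ⟪u t - Pf, u t - Pf⟫ = (0:ℝ) := le_antisymm hm hnn
  have : u t - Pf = 0 := inner_self_eq_zero.1 hz
  rw [sub_eq_zero] at this
  exact this
end

section
/- Let J : ℝ^n → ℝ be convex and absolutely one-homogeneous and let f ∈ ℝ^n. Then: (1) for every s ≥ 0 such that s·Q₀(f) ∈ ∂J(0), one has s·Q₀(f) ∈ ∂J(P₀(f)); (2) there exists s₀ > 0 such that s·Q₀(f) ∈ ∂J(0) for all s ∈ [0, s₀]. Consequently, on [0, s₀] the pair v(s) = P₀(f), q(s) = s·Q₀(f) solves the inverse scale space flow: q(0) = 0, q'(s) = f − v(s), and q(s) ∈ ∂J(v(s)) for all s ∈ [0, s₀]. -/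
open RealInnerProductSpace

/-- Initial behavior of the inverse scale space flow:
(1) if `s • Q₀ f ∈ ∂J(0)` then `s • Q₀ f ∈ ∂J(P₀ f)`; (2) there is `s₀ > 0` with
`s • Q₀ f ∈ ∂J(0)` for all `s ∈ [0, s₀]`; consequently, on `[0, s₀]` the pair
`v(s) = P₀ f`, `q(s) = s • Q₀ f` solves the inverse scale space flow:
`q(0) = 0`, `q'(s) = f - v(s)`, `q(s) ∈ ∂J(v(s))`. -/
theorem inverse_scale_space_initial_behavior {n : ℕ}
    (J : EuclideanSpace ℝ (Fin n) → ℝ)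
    (hconv : ConvexOn ℝ Set.univ J)
    (hhom : ∀ (s : ℝ) (u : EuclideanSpace ℝ (Fin n)), J (s • u) = |s| * J u)
    (N : Submodule ℝ (EuclideanSpace ℝ (Fin n)))
    (hN : (N : Set (EuclideanSpace ℝ (Fin n))) = {u | J u = 0})
    (f : EuclideanSpace ℝ (Fin n)) :
    (∀ s : ℝ, 0 ≤ s →
      s • (f - (Submodule.orthogonalProjectionOnto N f : EuclideanSpace ℝ (Fin n))) ∈ subdiff J 0 →
      s • (f - (Submodule.orthogonalProjectionOnto N f : EuclideanSpace ℝ (Fin n))) ∈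
        subdiff J (Submodule.orthogonalProjectionOnto N f : EuclideanSpace ℝ (Fin n))) ∧
    (∃ s₀ : ℝ, 0 < s₀ ∧
      (∀ s ∈ Set.Icc (0 : ℝ) s₀,
        s • (f - (Submodule.orthogonalProjectionOnto N f : EuclideanSpace ℝ (Fin n))) ∈ subdiff J 0) ∧
      ((0 : ℝ) • (f - (Submodule.orthogonalProjectionOnto N f : EuclideanSpace ℝ (Fin n))) = 0) ∧
      (∀ s ∈ Set.Icc (0 : ℝ) s₀,
        HasDerivAt
          (fun σ : ℝ =>
            σ • (f - (Submodule.orthogonalProjectionOnto N f : EuclideanSpace ℝ (Fin n))))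
          (f - (Submodule.orthogonalProjectionOnto N f : EuclideanSpace ℝ (Fin n))) s ∧
        s • (f - (Submodule.orthogonalProjectionOnto N f : EuclideanSpace ℝ (Fin n))) ∈
          subdiff J (Submodule.orthogonalProjectionOnto N f : EuclideanSpace ℝ (Fin n)))) := by
  set P : EuclideanSpace ℝ (Fin n) := (Submodule.orthogonalProjectionOnto N f : EuclideanSpace ℝ (Fin n)) with hPdef
  set g : EuclideanSpace ℝ (Fin n) := f - P with hgdef
  have hJ0 : J 0 = 0 := by simpa using hhom 0 0
  have hJneg : ∀ u, J (-u) = J u := by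
    intro u; simpa using hhom (-1) u
  have hJnonneg : ∀ u, 0 ≤ J u := by
    intro u
    have h := hconv.2 (Set.mem_univ u) (Set.mem_univ (-u))
      (by norm_num : (0:ℝ) ≤ 1/2) (by norm_num : (0:ℝ) ≤ 1/2) (by norm_num)
    have h0 : (1/2 : ℝ) • u + (1/2 : ℝ) • (-u) = 0 := by
      simp [smul_neg]
    rw [h0] at h
    simp only [smul_eq_mul, hJ0, hJneg] at h
    linarith
  have hJsub : ∀ u v, J (u + v) ≤ J u + J v := by
    intro u v
    have h := hconv.2 (Set.mem_univ u) (Set.mem_univ v)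
      (by norm_num : (0:ℝ) ≤ 1/2) (by norm_num : (0:ℝ) ≤ 1/2) (by norm_num)
    have e : u + v = (2:ℝ) • ((1/2 : ℝ) • u + (1/2 : ℝ) • v) := by
      rw [smul_add, smul_smul, smul_smul]; norm_num
    rw [e, hhom, abs_of_nonneg (by norm_num : (0:ℝ) ≤ 2)]
    simp only [smul_eq_mul] at h
    linarith
  have hJmem : ∀ u, u ∈ N → J u = 0 := by
    intro u hu
    have : u ∈ (N : Set (EuclideanSpace ℝ (Fin n))) := hu
    rw [hN] at this; exact this
  have hJadd : ∀ u w, w ∈ N → J (u + w) = J u := by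
    intro u w hw
    have h1 : J (u + w) ≤ J u := by
      have := hJsub u w; rw [hJmem w hw] at this; linarith
    have h2 : J u ≤ J (u + w) := by
      have := hJsub (u + w) (-w)
      rw [hJneg, hJmem w hw] at this
      simpa using this
    linarith
  have hgO : g ∈ Nᗮ := Submodule.sub_starProjection_mem_orthogonal (K := N) f
  have hPN : P ∈ N := (Submodule.orthogonalProjectionOnto N f).2
  have hJP : J P = 0 := hJmem P hPN
  have hgP : ⟪g, P⟫ = 0 := by
    have h := (Submodule.mem_orthogonal N g).mp hgO P hPN
    rwa [real_inner_comm] at h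
  have hsub0 : ∀ p : EuclideanSpace ℝ (Fin n), p ∈ subdiff J 0 ↔ ∀ v, ⟪p, v⟫ ≤ J v := by
    intro p
    constructor
    · intro hp v; have := hp v; simpa [hJ0] using this
    · intro hp v; simpa [hJ0] using hp v
  have part1 : ∀ s : ℝ, 0 ≤ s → s • g ∈ subdiff J 0 → s • g ∈ subdiff J P := by
    intro s _ hp v
    have hpv : ⟪s • g, v⟫ ≤ J v := (hsub0 _).mp hp v
    have hinner : ⟪s • g, v - P⟫ = ⟪s • g, v⟫ := by
      rw [inner_sub_right]
      have : ⟪s • g, P⟫ = 0 := by rw [real_inner_smul_left, hgP, mul_zero]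
      rw [this, sub_zero]
    rw [hJP, hinner, zero_add]
    exact hpv
  refine ⟨part1, ?_⟩
  -- key bound: ∃ s₀ > 0, ∀ s ∈ [0,s₀], s • g ∈ subdiff J 0
  have hJcont : Continuous J := by
    exact continuousOn_univ.mp (hconv.continuousOn isOpen_univ)
  have key : ∃ s₀ : ℝ, 0 < s₀ ∧ ∀ s ∈ Set.Icc (0:ℝ) s₀, s • g ∈ subdiff J 0 := by
    by_cases hg0 : g = 0
    · refine ⟨1, one_pos, fun s _ => ?_⟩
      rw [hsub0]
      intro v
      simp [hg0, hJnonneg v]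
    · -- the sphere of Nᗮ
      set S : Set (EuclideanSpace ℝ (Fin n)) :=
        Metric.sphere 0 1 ∩ (Nᗮ : Set (EuclideanSpace ℝ (Fin n))) with hSdef
      have hScpt : IsCompact S :=
        (isCompact_sphere 0 1).inter_right (Submodule.closed_of_finiteDimensional _)
      have hSne : S.Nonempty := by
        refine ⟨‖g‖⁻¹ • g, ?_, ?_⟩
        · simp [norm_smul, abs_of_nonneg, inv_mul_cancel₀ (norm_ne_zero_iff.mpr hg0)]
        · exact Submodule.smul_mem _ _ hgO
      obtain ⟨u₀, hu₀S, hu₀min⟩ := hScpt.exists_isMinOn hSne hJcont.continuousOn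
      set m : ℝ := J u₀ with hmdef
      have hmpos : 0 < m := by
        rcases lt_or_eq_of_le (hJnonneg u₀) with h | h
        · exact h
        · exfalso
          have hu₀N : u₀ ∈ N := by
            rw [← SetLike.mem_coe, hN]; exact h.symm
          have hu₀O : u₀ ∈ Nᗮ := hu₀S.2
          have : u₀ = 0 := by
            have := Submodule.inner_right_of_mem_orthogonal hu₀N hu₀O
            exact inner_self_eq_zero.mp this
          have h1 : u₀ ∈ Metric.sphere (0 : EuclideanSpace ℝ (Fin n)) 1 := hu₀S.1
          rw [this] at h1
          simp at h1
      -- J v ≥ m * ‖Qv‖ where Qv = v - orthogonalProjection N v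
      have hbound : ∀ v : EuclideanSpace ℝ (Fin n),
          m * ‖v - (Submodule.orthogonalProjectionOnto N v : EuclideanSpace ℝ (Fin n))‖ ≤ J v := by
        intro v
        set w : EuclideanSpace ℝ (Fin n) := v - (Submodule.orthogonalProjectionOnto N v : EuclideanSpace ℝ (Fin n)) with hwdef
        have hwO : w ∈ Nᗮ := Submodule.sub_starProjection_mem_orthogonal (K := N) v
        have hJv : J v = J w := by
          have : v = w + (Submodule.orthogonalProjectionOnto N v : EuclideanSpace ℝ (Fin n)) := by
            rw [hwdef]; abel
          rw [this, hJadd w _ (Submodule.orthogonalProjectionOnto N v).2]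
        by_cases hw0 : w = 0
        · rw [hJv, hw0, hJ0]; simp
        · have hwn : ‖w‖ ≠ 0 := norm_ne_zero_iff.mpr hw0
          have hmem : ‖w‖⁻¹ • w ∈ S := by
            refine ⟨?_, Submodule.smul_mem _ _ hwO⟩
            simp [norm_smul, abs_of_nonneg, inv_mul_cancel₀ hwn]
          have hmin : m ≤ J (‖w‖⁻¹ • w) := hu₀min hmem
          have : J (‖w‖⁻¹ • w) = ‖w‖⁻¹ * J w := by
            rw [hhom]; congr 1; exact abs_of_nonneg (by positivity)
          rw [this] at hmin
          have hwpos : (0:ℝ) < ‖w‖ := lt_of_le_of_ne (norm_nonneg w) (Ne.symm hwn)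
          rw [hJv]
          calc m * ‖w‖ ≤ (‖w‖⁻¹ * J w) * ‖w‖ := by
                exact mul_le_mul_of_nonneg_right hmin (norm_nonneg w)
            _ = J w := by field_simp
      refine ⟨m / (‖g‖ + 1), by positivity, fun s hs => ?_⟩
      rw [hsub0]
      intro v
      set w : EuclideanSpace ℝ (Fin n) := v - (Submodule.orthogonalProjectionOnto N v : EuclideanSpace ℝ (Fin n)) with hwdef
      have hgw : ⟪g, v⟫ = ⟪g, w⟫ := by
        rw [hwdef, inner_sub_right]
        have : ⟪g, (Submodule.orthogonalProjectionOnto N v : EuclideanSpace ℝ (Fin n))⟫ = 0 := by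
          have h := (Submodule.mem_orthogonal N g).mp hgO _ (Submodule.orthogonalProjectionOnto N v).2
          rwa [real_inner_comm] at h
        rw [this, sub_zero]
      have h1 : ⟪s • g, v⟫ = s * ⟪g, w⟫ := by
        rw [real_inner_smul_left, hgw]
      have h2 : ⟪g, w⟫ ≤ ‖g‖ * ‖w‖ := real_inner_le_norm g w
      have hsle : s * ‖g‖ ≤ m := by
        have hs2 : s ≤ m / (‖g‖ + 1) := hs.2
        have : s * ‖g‖ ≤ (m / (‖g‖ + 1)) * (‖g‖ + 1) := by
          apply mul_le_mul hs2 (by linarith [norm_nonneg g]) (norm_nonneg g)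
          positivity
        rw [div_mul_cancel₀] at this
        · exact this
        · positivity
      calc ⟪s • g, v⟫ = s * ⟪g, w⟫ := h1
        _ ≤ s * (‖g‖ * ‖w‖) := by
            apply mul_le_mul_of_nonneg_left h2 hs.1
        _ = (s * ‖g‖) * ‖w‖ := by ring
        _ ≤ m * ‖w‖ := mul_le_mul_of_nonneg_right hsle (norm_nonneg w)
        _ ≤ J v := hbound v
  obtain ⟨s₀, hs₀, hall⟩ := key
  refine ⟨s₀, hs₀, hall, zero_smul _ _, fun s hs => ⟨?_, part1 s hs.1 (hall s hs)⟩⟩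
  simpa using (hasDerivAt_id s).smul_const g
end

section
/- Let J : ℝ^n → ℝ be convex and absolutely one-homogeneous and suppose J satisfies (PS), i.e. ∂J(0) is the convex hull of a finite set. Then the set { p ∈ ℝ^n : p is the minimal-norm element of ∂J(u) for some u ∈ ℝ^n } is finite. -/
open RealInnerProductSpace

/-- Uniqueness of the minimal-norm element of a convex set. -/
lemma minNorm_unique {E : Type*} [NormedAddCommGroup E] [InnerProductSpace ℝ E]
    {C : Set E} (hC : Convex ℝ C) {p q : E} (hp : p ∈ C) (hq : q ∈ C)
    (hpm : ∀ r ∈ C, ‖p‖ ≤ ‖r‖) (hqm : ∀ r ∈ C, ‖q‖ ≤ ‖r‖) : p = q := by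
  have hm : (1/2 : ℝ) • p + (1/2 : ℝ) • q ∈ C :=
    hC hp hq (by norm_num) (by norm_num) (by norm_num)
  have heq : ‖p‖ = ‖q‖ := le_antisymm (hpm q hq) (hqm p hp)
  have h1 : ‖p‖ ≤ ‖(1/2 : ℝ) • p + (1/2 : ℝ) • q‖ := hpm _ hm
  have h2 : (1/2 : ℝ) • p + (1/2 : ℝ) • q = (1/2 : ℝ) • (p + q) := by
    rw [smul_add]
  have h3 : ‖(1/2 : ℝ) • (p + q)‖ = (1/2) * ‖p + q‖ := by
    rw [norm_smul]; norm_num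
  rw [h2, h3] at h1
  have hpar := parallelogram_law_with_norm ℝ p q
  have hsub : ‖p - q‖ = 0 := by
    nlinarith [norm_nonneg (p - q), norm_nonneg (p + q), norm_nonneg p]
  exact sub_eq_zero.mp (norm_eq_zero.mp hsub)

/-- If `J` is polyhedral, i.e. `∂J(0)` is the convex hull of a finite
set, then the set of all minimal-norm subgradients `{p | ∃ u, p is the minimal-norm
element of ∂J(u)}` is finite. -/
theorem minimal_norm_subgradients_finite {n : ℕ}
    (J : EuclideanSpace ℝ (Fin n) → ℝ)
    (hconv : ConvexOn ℝ Set.univ J)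
    (hhom : ∀ (s : ℝ) (u : EuclideanSpace ℝ (Fin n)), J (s • u) = |s| * J u)
    (hPS : ∃ F : Finset (EuclideanSpace ℝ (Fin n)),
      convexHull ℝ (F : Set (EuclideanSpace ℝ (Fin n))) = subdiff J 0) :
    Set.Finite {p : EuclideanSpace ℝ (Fin n) |
      ∃ u : EuclideanSpace ℝ (Fin n),
        p ∈ subdiff J u ∧ ∀ q ∈ subdiff J u, ‖p‖ ≤ ‖q‖} := by
  classical
  obtain ⟨F, hF⟩ := hPS
  have hJ0 : J 0 = 0 := by
    have h := hhom 0 0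
    simpa using h
  -- membership in subdiff J 0 is the support-function inequality
  have hsub0 : ∀ p ∈ subdiff J 0, ∀ v, ⟪p, v⟫ ≤ J v := by
    intro p hp v
    have h := hp v
    simpa [hJ0] using h
  have hmem0 : ∀ p : EuclideanSpace ℝ (Fin n), (∀ v, ⟪p, v⟫ ≤ J v) → p ∈ subdiff J 0 := by
    intro p hp v
    simpa [hJ0] using hp v
  have hFmem : ∀ x ∈ F, x ∈ subdiff J 0 := fun x hx =>
    hF ▸ subset_convexHull ℝ (F : Set (EuclideanSpace ℝ (Fin n))) hx
  -- characterization of subdiff J u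
  have hchar : ∀ (u p : EuclideanSpace ℝ (Fin n)),
      p ∈ subdiff J u ↔ (p ∈ subdiff J 0 ∧ ⟪p, u⟫ = J u) := by
    intro u p
    constructor
    · intro hp
      have h2u : J ((2 : ℝ) • u) = 2 * J u := by
        rw [hhom]; norm_num
      have hle : ⟪p, u⟫ ≤ J u := by
        have h := hp ((2 : ℝ) • u)
        rw [h2u] at h
        have hsv : (2 : ℝ) • u - u = u := by
          rw [two_smul]; abel
        rw [hsv] at h
        linarith
      have hge : J u ≤ ⟪p, u⟫ := by
        have h := hp 0
        rw [hJ0] at h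
        have : ⟪p, (0 : EuclideanSpace ℝ (Fin n)) - u⟫ = -⟪p, u⟫ := by
          rw [zero_sub, inner_neg_right]
        rw [this] at h
        linarith
      have hpu : ⟪p, u⟫ = J u := le_antisymm hle hge
      refine ⟨hmem0 p ?_, hpu⟩
      intro v
      have h := hp v
      rw [inner_sub_right, hpu] at h
      linarith
    · rintro ⟨hp0, hpu⟩ v
      have h := hsub0 p hp0 v
      rw [inner_sub_right, hpu]
      linarith
  -- subdiff J u is the convex hull of a face of F
  have hface : ∀ u : EuclideanSpace ℝ (Fin n),
      subdiff J u =
        convexHull ℝ ((F.filter fun x => ⟪x, u⟫ = J u : Finset _) :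
          Set (EuclideanSpace ℝ (Fin n))) := by
    intro u
    apply Set.Subset.antisymm
    · intro p hp
      obtain ⟨hp0, hpu⟩ := (hchar u p).1 hp
      rw [← hF, Finset.convexHull_eq] at hp0
      obtain ⟨w, hw0, hw1, hwp⟩ := hp0
      set S := F.filter fun x => ⟪x, u⟫ = J u with hS
      have hcen : F.centerMass w id = ∑ x ∈ F, w x • x := by
        rw [Finset.centerMass_eq_of_sum_1 _ _ hw1]; rfl
      have hip : ∑ x ∈ F, w x * ⟪x, u⟫ = J u := by
        have : ⟪p, u⟫ = ∑ x ∈ F, w x * ⟪x, u⟫ := by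
          rw [← hwp, hcen, sum_inner]
          exact Finset.sum_congr rfl fun x _ => real_inner_smul_left x u (w x)
        rw [← this, hpu]
      have hterm : ∀ x ∈ F, 0 ≤ w x * (J u - ⟪x, u⟫) := by
        intro x hx
        have : ⟪x, u⟫ ≤ J u := hsub0 x (hFmem x hx) u
        have := sub_nonneg.mpr this
        exact mul_nonneg (hw0 x hx) this
      have hsum0 : ∑ x ∈ F, w x * (J u - ⟪x, u⟫) = 0 := by
        have : ∑ x ∈ F, w x * (J u - ⟪x, u⟫)
            = (∑ x ∈ F, w x) * J u - ∑ x ∈ F, w x * ⟪x, u⟫ := by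
          rw [Finset.sum_mul, ← Finset.sum_sub_distrib]
          exact Finset.sum_congr rfl fun x _ => by ring
        rw [this, hw1, hip]; ring
      have hzero : ∀ x ∈ F, x ∉ S → w x = 0 := by
        intro x hx hxS
        have h0 : w x * (J u - ⟪x, u⟫) = 0 :=
          (Finset.sum_eq_zero_iff_of_nonneg hterm).mp hsum0 x hx
        have hne : ⟪x, u⟫ ≠ J u := by
          intro hc
          exact hxS (Finset.mem_filter.mpr ⟨hx, hc⟩)
        have hlt : ⟪x, u⟫ < J u := lt_of_le_of_ne (hsub0 x (hFmem x hx) u) hne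
        have : J u - ⟪x, u⟫ ≠ 0 := by linarith
        rcases mul_eq_zero.mp h0 with h | h
        · exact h
        · exact absurd h this
      have hSsum : ∑ x ∈ S, w x = 1 := by
        rw [Finset.sum_subset (Finset.filter_subset _ _) hzero, hw1]
      have hScen : S.centerMass w id = F.centerMass w id :=
        Finset.centerMass_subset id (Finset.filter_subset _ _) hzero
      have : S.centerMass w id ∈ convexHull ℝ (S : Set (EuclideanSpace ℝ (Fin n))) := by
        apply Finset.centerMass_mem_convexHull
        · exact fun x hx => hw0 x (Finset.filter_subset _ _ hx)
        · rw [hSsum]; norm_num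
        · exact fun x hx => Finset.mem_coe.mpr hx
      rwa [hScen, hwp] at this
    · apply convexHull_min
      · intro x hx
        rw [Finset.mem_coe, Finset.mem_filter] at hx
        exact (hchar u x).2 ⟨hFmem x hx.1, hx.2⟩
      · intro p hp q hq a b ha hb hab v
        have h1 := hp v
        have h2 := hq v
        have hin : ⟪a • p + b • q, v - u⟫ = a * ⟪p, v - u⟫ + b * ⟪q, v - u⟫ := by
          rw [inner_add_left, real_inner_smul_left, real_inner_smul_left]
        rw [hin]
        have h3 : a * J v + b * J v = J v := by rw [← add_mul, hab, one_mul]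
        have h4 : a * J u + b * J u = J u := by rw [← add_mul, hab, one_mul]
        have h5 := add_le_add (mul_le_mul_of_nonneg_left h1 ha) (mul_le_mul_of_nonneg_left h2 hb)
        nlinarith [h5]
  -- conclude: each minimal-norm subgradient is the unique min-norm point of the
  -- convex hull of some subset of F
  have key : {p : EuclideanSpace ℝ (Fin n) |
      ∃ u, p ∈ subdiff J u ∧ ∀ q ∈ subdiff J u, ‖p‖ ≤ ‖q‖} ⊆
      ⋃ S ∈ F.powerset, {p : EuclideanSpace ℝ (Fin n) |
        p ∈ convexHull ℝ (S : Set (EuclideanSpace ℝ (Fin n))) ∧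
        ∀ q ∈ convexHull ℝ (S : Set (EuclideanSpace ℝ (Fin n))), ‖p‖ ≤ ‖q‖} := by
    rintro p ⟨u, hp, hmin⟩
    rw [hface u] at hp hmin
    exact Set.mem_biUnion (Finset.mem_powerset.mpr (Finset.filter_subset _ _)) ⟨hp, hmin⟩
  apply Set.Finite.subset _ key
  apply Set.Finite.biUnion (F.powerset.finite_toSet)
  intro S _
  apply Set.Subsingleton.finite
  intro p hp q hq
  exact minNorm_unique (convex_convexHull ℝ _) hp.1 hq.1 hp.2 hq.2
end

section
/- Let J : ℝ^n → ℝ be convex and absolutely one-homogeneous satisfying (PS), i.e. ∂J(0) is the convex hull of a finite set. Let u₀ ∈ ℝ^n and let p̂ be the unique minimal-norm element of ∂J(u₀). Then there exists δ > 0 such that p̂ ∈ ∂J(u₀ − t·p̂) for all t ∈ [0, δ]. (This is the key step showing the gradient flow of J is piecewise linear in u and piecewise constant in the subgradient.) -/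
open RealInnerProductSpace

section aux
variable {n : ℕ} {J : EuclideanSpace ℝ (Fin n) → ℝ}

lemma myJ_zero (hhom : ∀ (s : ℝ) (u : EuclideanSpace ℝ (Fin n)), J (s • u) = |s| * J u) :
    J 0 = 0 := by
  have := hhom 0 0
  simpa using this

lemma myJ_nonneg (hconv : ConvexOn ℝ Set.univ J)
    (hhom : ∀ (s : ℝ) (u : EuclideanSpace ℝ (Fin n)), J (s • u) = |s| * J u)
    (u : EuclideanSpace ℝ (Fin n)) : 0 ≤ J u := by
  have hneg : J (-u) = J u := by
    have := hhom (-1) u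
    simpa using this
  have h := hconv.2 (Set.mem_univ u) (Set.mem_univ (-u))
    (by norm_num : (0:ℝ) ≤ 1/2) (by norm_num : (0:ℝ) ≤ 1/2) (by norm_num)
  have h0 : (1/2 : ℝ) • u + (1/2 : ℝ) • (-u) = 0 := by
    simp [smul_neg]
  rw [h0, myJ_zero hhom, hneg] at h; simp only [smul_eq_mul] at h
  linarith

lemma myJ_subadd (hconv : ConvexOn ℝ Set.univ J)
    (hhom : ∀ (s : ℝ) (u : EuclideanSpace ℝ (Fin n)), J (s • u) = |s| * J u)
    (x y : EuclideanSpace ℝ (Fin n)) : J (x + y) ≤ J x + J y := by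
  have h := hconv.2 (Set.mem_univ x) (Set.mem_univ y)
    (by norm_num : (0:ℝ) ≤ 1/2) (by norm_num : (0:ℝ) ≤ 1/2) (by norm_num)
  have h2 : J ((1/2:ℝ) • (x + y)) = (1/2) * J (x + y) := by
    rw [hhom]; norm_num
  rw [smul_add] at h2
  simp only [smul_eq_mul] at h
  linarith [h2 ▸ h]

lemma mem_subdiff_zero_of_mem (hhom : ∀ (s : ℝ) (u : EuclideanSpace ℝ (Fin n)), J (s • u) = |s| * J u)
    {u p : EuclideanSpace ℝ (Fin n)} (hp : p ∈ subdiff J u) :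
    p ∈ subdiff J 0 ∧ ⟪p, u⟫ = J u := by
  have h0 := hp 0
  have h2 := hp ((2:ℝ) • u)
  rw [myJ_zero hhom] at h0
  have h2' : J ((2:ℝ) • u) = 2 * J u := by rw [hhom]; norm_num
  rw [h2'] at h2
  have e2 : ((2:ℝ) • u) - u = u := by
    rw [two_smul]; abel
  rw [e2] at h2
  have hzu : (0:EuclideanSpace ℝ (Fin n)) - u = -u := by simp
  rw [hzu, inner_neg_right] at h0
  have heq : ⟪p, u⟫ = J u := by linarith
  refine ⟨fun v => ?_, heq⟩
  have := hp v
  rw [inner_sub_right] at this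
  rw [myJ_zero hhom]
  have : ⟪p, v⟫ ≤ J v := by rw [heq] at this; linarith
  simpa using this

lemma mem_subdiff_of_zero (hhom : ∀ (s : ℝ) (u : EuclideanSpace ℝ (Fin n)), J (s • u) = |s| * J u)
    {u p : EuclideanSpace ℝ (Fin n)} (hp : p ∈ subdiff J 0) (heq : ⟪p, u⟫ = J u) :
    p ∈ subdiff J u := by
  intro v
  have := hp v
  rw [myJ_zero hhom] at this
  simp only [sub_zero] at this
  rw [inner_sub_right, ← heq]
  linarith

/-- Existence of a "support" subgradient at any point, via Hahn–Banach. -/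
lemma exists_support (hconv : ConvexOn ℝ Set.univ J)
    (hhom : ∀ (s : ℝ) (u : EuclideanSpace ℝ (Fin n)), J (s • u) = |s| * J u)
    (v : EuclideanSpace ℝ (Fin n)) :
    ∃ p ∈ subdiff J 0, ⟪p, v⟫ = J v := by
  by_cases hv : v = 0
  · refine ⟨0, fun w => ?_, ?_⟩
    · rw [myJ_zero hhom]
      simpa using myJ_nonneg hconv hhom w
    · simp [hv, myJ_zero hhom]
  · set f : EuclideanSpace ℝ (Fin n) →ₗ.[ℝ] ℝ := LinearPMap.mkSpanSingleton v (J v) hv with hf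
    have hfle : ∀ x : f.domain, f x ≤ J x := by
      rintro ⟨x, hx⟩
      rcases Submodule.mem_span_singleton.1 hx with ⟨t, rfl⟩
      rw [LinearPMap.mkSpanSingleton'_apply]
      rw [hhom t v]
      have h1 : t * J v ≤ |t| * J v :=
        mul_le_mul_of_nonneg_right (le_abs_self t) (myJ_nonneg hconv hhom v)
      simpa using h1
    obtain ⟨g, hg1, hg2⟩ := exists_extension_of_le_sublinear f J
      (fun c hc x => by rw [hhom c x, abs_of_pos hc])
      (myJ_subadd hconv hhom) hfle
    set p := (InnerProductSpace.toDual ℝ (EuclideanSpace ℝ (Fin n))).symm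
      (LinearMap.toContinuousLinearMap g) with hpdef
    have hpx : ∀ x, ⟪p, x⟫ = g x := by
      intro x
      rw [hpdef, InnerProductSpace.toDual_symm_apply]
      rfl
    have hgv : g v = J v := by
      have := hg1 ⟨v, Submodule.mem_span_singleton_self v⟩
      rwa [LinearPMap.mkSpanSingleton_apply] at this
    refine ⟨p, fun w => ?_, by rw [hpx, hgv]⟩
    rw [myJ_zero hhom]
    simpa [hpx] using hg2 w

end aux

/-- piecewise-linear dynamics of the gradient flow, key step: for
polyhedral `J` (i.e. `∂J(0)` a convex hull of a finite set) and `phat` the minimal-norm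
element of `∂J(u₀)`, there is `δ > 0` with `phat ∈ ∂J(u₀ - t • phat)` for all `t ∈ [0, δ]`. -/
theorem gradient_flow_piecewise_linear_step {n : ℕ}
    (J : EuclideanSpace ℝ (Fin n) → ℝ)
    (hconv : ConvexOn ℝ Set.univ J)
    (hhom : ∀ (s : ℝ) (u : EuclideanSpace ℝ (Fin n)), J (s • u) = |s| * J u)
    (hPS : ∃ F : Finset (EuclideanSpace ℝ (Fin n)),
      convexHull ℝ (F : Set (EuclideanSpace ℝ (Fin n))) = subdiff J 0)
    (u₀ phat : EuclideanSpace ℝ (Fin n))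
    (hmem : phat ∈ subdiff J u₀)
    (hmin : ∀ q ∈ subdiff J u₀, ‖phat‖ ≤ ‖q‖) :
    ∃ δ : ℝ, 0 < δ ∧ ∀ t ∈ Set.Icc (0 : ℝ) δ, phat ∈ subdiff J (u₀ - t • phat) := by
  obtain ⟨F, hF⟩ := hPS
  obtain ⟨hphat0, hphatu⟩ := mem_subdiff_zero_of_mem hhom hmem
  -- minimal norm fact
  have hminsq : ∀ q ∈ subdiff J u₀, ‖phat‖^2 ≤ ⟪phat, q⟫ := by
    intro q hq
    by_contra hc
    push_neg at hc
    set d := q - phat with hd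
    have hcc : ⟪phat, d⟫ < 0 := by
      rw [hd, inner_sub_right, real_inner_self_eq_norm_sq]
      linarith
    have hdne : d ≠ 0 := by
      intro h
      rw [h, inner_zero_right] at hcc; linarith
    have hdpos : (0:ℝ) < ‖d‖^2 := by have := norm_pos_iff.mpr hdne; positivity
    set θ : ℝ := min 1 (-⟪phat, d⟫ / ‖d‖^2) with hθ
    have hθpos : 0 < θ := lt_min one_pos (div_pos (by linarith) hdpos)
    have hθ1 : θ ≤ 1 := min_le_left _ _
    have hθ2 : θ * ‖d‖^2 ≤ -⟪phat, d⟫ := by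
      have := min_le_right (1:ℝ) (-⟪phat, d⟫ / ‖d‖^2)
      calc θ * ‖d‖^2 ≤ (-⟪phat, d⟫ / ‖d‖^2) * ‖d‖^2 :=
            mul_le_mul_of_nonneg_right this (le_of_lt hdpos)
        _ = -⟪phat, d⟫ := by field_simp
    have hqθ : phat + θ • d ∈ subdiff J u₀ := by
      intro v
      have h1 := hmem v
      have h2 := hq v
      rw [inner_add_left, real_inner_smul_left]
      have expand : ⟪d, v - u₀⟫ = ⟪q, v - u₀⟫ - ⟪phat, v - u₀⟫ := by
        rw [hd, inner_sub_left]
      rw [expand]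
      nlinarith [hθpos.le, hθ1]
    have hn := hmin _ hqθ
    have hn2 : ‖phat‖^2 ≤ ‖phat + θ • d‖^2 := by
      have := sq_le_sq' (by linarith [norm_nonneg phat, norm_nonneg (phat + θ • d)]) hn
      exact this
    rw [norm_add_sq_real, real_inner_smul_right, norm_smul, mul_pow, Real.norm_eq_abs,
      abs_of_pos hθpos] at hn2
    nlinarith [hθpos]
  -- F is nonempty
  have hFne : F.Nonempty := by
    rcases F.eq_empty_or_nonempty with h | h
    · exfalso
      rw [← hF, h] at hphat0
      simp at hphat0
    · exact h
  -- key quantities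
  have hFsub : ∀ f ∈ F, f ∈ subdiff J 0 := by
    intro f hf
    rw [← hF]
    exact subset_convexHull ℝ _ hf
  have hgap : ∀ f ∈ F, 0 < ‖phat‖^2 - ⟪f, phat⟫ → 0 < J u₀ - ⟪f, u₀⟫ := by
    intro f hf hs
    have hle : ⟪f, u₀⟫ ≤ J u₀ := by
      have := (hFsub f hf) u₀
      rw [myJ_zero hhom] at this
      simpa using this
    rcases lt_or_eq_of_le hle with h | h
    · linarith
    · exfalso
      have : f ∈ subdiff J u₀ := mem_subdiff_of_zero hhom (hFsub f hf) h
      have := hminsq f this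
      rw [real_inner_comm] at this
      linarith
  set δ : ℝ := F.inf' hFne (fun f => if 0 < ‖phat‖^2 - ⟪f, phat⟫
      then (J u₀ - ⟪f, u₀⟫) / (‖phat‖^2 - ⟪f, phat⟫) else 1) with hδ
  have hδpos : 0 < δ := by
    rw [hδ, Finset.lt_inf'_iff]
    intro f hf
    by_cases h : 0 < ‖phat‖^2 - ⟪f, phat⟫
    · rw [if_pos h]
      exact div_pos (hgap f hf h) h
    · rw [if_neg h]; norm_num
  refine ⟨δ, hδpos, fun t ht => ?_⟩
  obtain ⟨ht0, htδ⟩ := ht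
  set w := u₀ - t • phat with hw
  -- upper bound on ⟪f, w⟫ for f ∈ F
  have hfw : ∀ f ∈ F, ⟪f, w⟫ ≤ J u₀ - t * ‖phat‖^2 := by
    intro f hf
    have hle : ⟪f, u₀⟫ ≤ J u₀ := by
      have := (hFsub f hf) u₀
      rw [myJ_zero hhom] at this
      simpa using this
    rw [hw, inner_sub_right, real_inner_smul_right]
    by_cases h : 0 < ‖phat‖^2 - ⟪f, phat⟫
    · have hδle : δ ≤ (J u₀ - ⟪f, u₀⟫) / (‖phat‖^2 - ⟪f, phat⟫) := by
        have := Finset.inf'_le (fun f => if 0 < ‖phat‖^2 - ⟪f, phat⟫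
          then (J u₀ - ⟪f, u₀⟫) / (‖phat‖^2 - ⟪f, phat⟫) else 1) hf
        rwa [if_pos h] at this
      have : t * (‖phat‖^2 - ⟪f, phat⟫) ≤ J u₀ - ⟪f, u₀⟫ :=
        (le_div_iff₀ h).mp (le_trans htδ hδle)
      nlinarith
    · push_neg at h
      nlinarith
  -- J w ≤ J u₀ - t ‖phat‖²
  obtain ⟨p, hp0, hpw⟩ := exists_support hconv hhom w
  have hpF : p ∈ convexHull ℝ (F : Set (EuclideanSpace ℝ (Fin n))) := by rw [hF]; exact hp0
  have hhalf : convexHull ℝ (F : Set (EuclideanSpace ℝ (Fin n))) ⊆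
      {q | ⟪q, w⟫ ≤ J u₀ - t * ‖phat‖^2} := by
    apply convexHull_min
    · intro f hf
      exact hfw f hf
    · exact convex_halfSpace_le
        ⟨fun a b => inner_add_left a b w, fun c a => real_inner_smul_left a w c⟩ _
  have hJw_le : J w ≤ J u₀ - t * ‖phat‖^2 := by
    rw [← hpw]
    exact hhalf hpF
  have hlow : ⟪phat, w⟫ = J u₀ - t * ‖phat‖^2 := by
    rw [hw, inner_sub_right, real_inner_smul_right, real_inner_self_eq_norm_sq, hphatu]
  have hJw_ge : J u₀ - t * ‖phat‖^2 ≤ J w := by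
    have := hphat0 w
    rw [myJ_zero hhom] at this
    simp only [sub_zero] at this
    rw [← hlow]
    simpa using this
  exact mem_subdiff_of_zero hhom hphat0 (by rw [hlow]; linarith)
end

section
/- Let J : ℝ^n → ℝ be convex and absolutely one-homogeneous satisfying (PS), i.e. ∂J(0) is the convex hull of a finite set. Let f ∈ ℝ^n and let q₀ ∈ ∂J(0). The set C = {v ∈ ℝ^n : q₀ ∈ ∂J(v)} is nonempty, closed and convex; let v̂ be the unique element of C closest to f. Then there exists δ > 0 such that q₀ + s·(f − v̂) ∈ ∂J(v̂) for all s ∈ [0, δ]. (This is the key step showing the inverse scale space flow of J is piecewise linear in the dual variable and piecewise constant in the primal variable.) -/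
open RealInnerProductSpace

/-- A finitely generated cone in a finite-dimensional real inner product space is closed. -/
lemma isClosed_finsetCone {E : Type*} [NormedAddCommGroup E] [InnerProductSpace ℝ E]
    [FiniteDimensional ℝ E] {ι : Type*} (a : ι → E) (s : Finset ι) :
    IsClosed {x : E | ∃ l : ι → ℝ, (∀ i ∈ s, 0 ≤ l i) ∧ ∑ i ∈ s, l i • a i = x} := by
  classical
  induction s using Finset.strongInduction with
  | _ s ih =>
    by_cases hli : LinearIndependent ℝ (fun i : s => a i)
    · -- linearly independent generators: image of a closed set under a closed embedding
      let L : (s → ℝ) →ₗ[ℝ] E :=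
        { toFun := fun g => ∑ i : s, g i • a i
          map_add' := by intro g h; simp [add_smul, Finset.sum_add_distrib]
          map_smul' := by intro c g; simp [mul_smul, Finset.smul_sum] }
      have hker : LinearMap.ker L = ⊥ := by
        rw [LinearMap.ker_eq_bot']
        intro g hg
        funext i
        exact Fintype.linearIndependent_iff.1 hli g hg i
      have hLemb := LinearMap.isClosedEmbedding_of_injective hker
      have hset : {x : E | ∃ l : ι → ℝ, (∀ i ∈ s, 0 ≤ l i) ∧ ∑ i ∈ s, l i • a i = x}
          = L '' {g : s → ℝ | ∀ i, 0 ≤ g i} := by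
        ext x
        constructor
        · rintro ⟨l, hl, rfl⟩
          refine ⟨fun i => l i, fun i => hl i i.2, ?_⟩
          show ∑ i : s, l i • a i = _
          rw [Finset.sum_coe_sort s (fun i => l i • a i)]
        · rintro ⟨g, hg, rfl⟩
          refine ⟨fun i => if h : i ∈ s then g ⟨i, h⟩ else 0, fun i hi => by simp [hi, hg _], ?_⟩
          show _ = ∑ i : s, g i • a i
          rw [← Finset.sum_coe_sort s (fun i => (if h : i ∈ s then g ⟨i, h⟩ else 0) • a i)]
          exact Finset.sum_congr rfl fun i _ => by rw [dif_pos i.2]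
      have hclosed : IsClosed {g : s → ℝ | ∀ i, 0 ≤ g i} := by
        have : {g : s → ℝ | ∀ i, 0 ≤ g i} = ⋂ i, {g : s → ℝ | 0 ≤ g i} := by
          ext g; simp
        rw [this]
        exact isClosed_iInter fun i => isClosed_le continuous_const (continuous_apply i)
      rw [hset]
      exact hLemb.isClosedMap _ hclosed
    · -- dependent generators: the cone is a finite union of cones with fewer generators
      rw [Fintype.not_linearIndependent_iff] at hli
      have key : ∃ g : s → ℝ, (∑ i : s, g i • a i = 0) ∧ ∃ i, 0 < g i := by
        obtain ⟨g, hgsum, i₀, hi₀⟩ := hli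
        rcases Ne.lt_or_gt hi₀ with h | h
        · have hg' : ∑ x ∈ s.attach, g x • a ↑x = 0 := by
            rw [← Finset.univ_eq_attach]; exact hgsum
          refine ⟨-g, by simp [Finset.sum_neg_distrib, hg'], i₀, by simpa using h⟩
        · exact ⟨g, hgsum, i₀, h⟩
      obtain ⟨g, hgsum, i₀, hi₀⟩ := key
      set G : ι → ℝ := fun i => if h : i ∈ s then g ⟨i, h⟩ else 0 with hG
      have hGsum : ∑ i ∈ s, G i • a i = 0 := by
        rw [← Finset.sum_coe_sort s (fun i => G i • a i)]
        rw [Finset.sum_congr rfl (fun (i : s) _ => by rw [show G ↑i = g i from dif_pos i.2])]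
        exact hgsum
      set T : Finset ι := s.filter (fun i => 0 < G i) with hT
      have hTne : T.Nonempty := ⟨↑i₀, Finset.mem_filter.2 ⟨i₀.2, by
        rw [show G ↑i₀ = g i₀ from dif_pos i₀.2]; exact hi₀⟩⟩
      have hunion : {x : E | ∃ l : ι → ℝ, (∀ i ∈ s, 0 ≤ l i) ∧ ∑ i ∈ s, l i • a i = x}
          = ⋃ j ∈ T, {x : E | ∃ l : ι → ℝ,
              (∀ i ∈ s.erase j, 0 ≤ l i) ∧ ∑ i ∈ s.erase j, l i • a i = x} := by
        ext x
        simp only [Set.mem_iUnion, Set.mem_setOf_eq, exists_prop]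
        constructor
        · rintro ⟨l, hl, rfl⟩
          obtain ⟨j, hjT, hjmin⟩ := T.exists_min_image (fun i => l i / G i) hTne
          have hjs : j ∈ s := (Finset.mem_filter.1 hjT).1
          have hGj : 0 < G j := (Finset.mem_filter.1 hjT).2
          set t := l j / G j with ht
          have ht0 : 0 ≤ t := div_nonneg (hl j hjs) hGj.le
          refine ⟨j, hjT, fun i => l i - t * G i, ?_, ?_⟩
          · intro i hi
            show 0 ≤ l i - t * G i
            have his : i ∈ s := Finset.mem_of_mem_erase hi
            by_cases hGi : 0 < G i
            · have h1 : t ≤ l i / G i := hjmin i (Finset.mem_filter.2 ⟨his, hGi⟩)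
              have h2 := (le_div_iff₀ hGi).1 h1
              linarith
            · have h1 : t * G i ≤ 0 := mul_nonpos_of_nonneg_of_nonpos ht0 (not_lt.1 hGi)
              have := hl i his
              linarith
          · have hlj : l j - t * G j = 0 := by
              rw [ht, div_mul_cancel₀ _ hGj.ne']
              ring
            show ∑ i ∈ s.erase j, (l i - t * G i) • a i = ∑ i ∈ s, l i • a i
            rw [Finset.sum_erase s (show (l j - t * G j) • a j = 0 by rw [hlj, zero_smul])]
            rw [Finset.sum_congr rfl
              (fun i _ => show (l i - t * G i) • a i = l i • a i - t • (G i • a i) by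
                rw [sub_smul, smul_smul])]
            rw [Finset.sum_sub_distrib, ← Finset.smul_sum, hGsum, smul_zero, sub_zero]
        · rintro ⟨j, hjT, l, hl, rfl⟩
          have hjs : j ∈ s := (Finset.mem_filter.1 hjT).1
          refine ⟨fun i => if i = j then 0 else l i, ?_, ?_⟩
          · intro i hi
            show 0 ≤ if i = j then 0 else l i
            split_ifs with h
            · exact le_rfl
            · exact hl i (Finset.mem_erase.2 ⟨h, hi⟩)
          · show ∑ i ∈ s, (if i = j then 0 else l i) • a i = ∑ i ∈ s.erase j, l i • a i
            rw [← Finset.add_sum_erase _ _ hjs, if_pos rfl, zero_smul, zero_add]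
            exact Finset.sum_congr rfl fun i hi => by
              rw [if_neg (Finset.mem_erase.1 hi).1]
      rw [hunion]
      exact T.finite_toSet.isClosed_biUnion fun j hj =>
        ih _ (Finset.erase_ssubset (Finset.mem_filter.1 hj).1)

lemma exists_dual_vector_of_onehom {n : ℕ} (J : EuclideanSpace ℝ (Fin n) → ℝ)
    (hconv : ConvexOn ℝ Set.univ J)
    (hhom : ∀ (s : ℝ) (u : EuclideanSpace ℝ (Fin n)), J (s • u) = |s| * J u)
    (v : EuclideanSpace ℝ (Fin n)) :
    ∃ p : EuclideanSpace ℝ (Fin n), (∀ w, ⟪p, w⟫ ≤ J w) ∧ ⟪p, v⟫ = J v := by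
  have hJ0 : J 0 = 0 := by simpa using hhom 0 0
  have hJneg : ∀ w, J (-w) = J w := fun w => by simpa using hhom (-1) w
  have hJnonneg : ∀ w, 0 ≤ J w := by
    intro w
    have h1 : J ((1/2 : ℝ) • w + (1/2 : ℝ) • (-w)) ≤ (1/2) * J w + (1/2) * J (-w) :=
      hconv.2 (Set.mem_univ w) (Set.mem_univ (-w)) (by norm_num) (by norm_num) (by norm_num)
    have h2 : (1/2 : ℝ) • w + (1/2 : ℝ) • (-w) = 0 := by
      rw [smul_neg]; exact add_neg_cancel _
    rw [h2, hJ0, hJneg] at h1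
    linarith
  have hsub : ∀ x y, J (x + y) ≤ J x + J y := by
    intro x y
    have h1 : J ((1/2 : ℝ) • x + (1/2 : ℝ) • y) ≤ (1/2) * J x + (1/2) * J y :=
      hconv.2 (Set.mem_univ x) (Set.mem_univ y) (by norm_num) (by norm_num) (by norm_num)
    have h2 : (1/2 : ℝ) • x + (1/2 : ℝ) • y = (1/2 : ℝ) • (x + y) := by
      rw [smul_add]
    have h3 : J ((1/2 : ℝ) • (x + y)) = (1/2) * J (x + y) := by
      rw [hhom]; norm_num
    rw [h2, h3] at h1
    linarith
  by_cases hv : v = 0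
  · refine ⟨0, fun w => ?_, ?_⟩
    · simpa using hJnonneg w
    · simp [hv, hJ0]
  · obtain ⟨g, hg1, hg2⟩ := exists_extension_of_le_sublinear
      (LinearPMap.mkSpanSingleton v (J v) hv) J
      (fun c hc x => by rw [hhom, abs_of_pos hc])
      hsub
      (by
        rintro ⟨x, hx⟩
        obtain ⟨c, rfl⟩ := Submodule.mem_span_singleton.1 hx
        rw [LinearPMap.mkSpanSingleton'_apply]
        rw [hhom]
        have h1 : c ≤ |c| := le_abs_self c
        have h2 := hJnonneg v
        have : c • J v = c * J v := rfl
        rw [RingHom.id_apply, this]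
        nlinarith)
    set p := (InnerProductSpace.toDual ℝ (EuclideanSpace ℝ (Fin n))).symm
      (LinearMap.toContinuousLinearMap g) with hp
    have hpw : ∀ w, ⟪p, w⟫ = g w := by
      intro w
      rw [hp, InnerProductSpace.toDual_symm_apply]
      simp
    refine ⟨p, fun w => by rw [hpw w]; exact hg2 w, ?_⟩
    rw [hpw v]
    have h := hg1 ⟨v, Submodule.mem_span_singleton_self v⟩
    rw [LinearPMap.mkSpanSingleton_apply] at h
    exact h

/-- piecewise dynamics of the inverse scale space flow, key step:
for polyhedral `J` and `q₀ ∈ ∂J(0)`, the set `C = {v | q₀ ∈ ∂J(v)}` is nonempty,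
closed and convex, and if `vhat` is the element of `C` closest to `f`, then there
is `δ > 0` with `q₀ + s • (f - vhat) ∈ ∂J(vhat)` for all `s ∈ [0, δ]`. -/
theorem inverse_scale_space_piecewise_step {n : ℕ}
    (J : EuclideanSpace ℝ (Fin n) → ℝ)
    (hconv : ConvexOn ℝ Set.univ J)
    (hhom : ∀ (s : ℝ) (u : EuclideanSpace ℝ (Fin n)), J (s • u) = |s| * J u)
    (hPS : ∃ F : Finset (EuclideanSpace ℝ (Fin n)),
      convexHull ℝ (F : Set (EuclideanSpace ℝ (Fin n))) = subdiff J 0)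
    (f q₀ : EuclideanSpace ℝ (Fin n))
    (hq₀ : q₀ ∈ subdiff J 0)
    (vhat : EuclideanSpace ℝ (Fin n))
    (hvhat : vhat ∈ {v : EuclideanSpace ℝ (Fin n) | q₀ ∈ subdiff J v})
    (hclosest : ∀ v ∈ {v : EuclideanSpace ℝ (Fin n) | q₀ ∈ subdiff J v},
      ‖vhat - f‖ ≤ ‖v - f‖) :
    ({v : EuclideanSpace ℝ (Fin n) | q₀ ∈ subdiff J v}).Nonempty ∧
    IsClosed {v : EuclideanSpace ℝ (Fin n) | q₀ ∈ subdiff J v} ∧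
    Convex ℝ {v : EuclideanSpace ℝ (Fin n) | q₀ ∈ subdiff J v} ∧
    ∃ δ : ℝ, 0 < δ ∧ ∀ s ∈ Set.Icc (0 : ℝ) δ,
      q₀ + s • (f - vhat) ∈ subdiff J vhat := by
  classical
  obtain ⟨F, hF⟩ := hPS
  set C := {v : EuclideanSpace ℝ (Fin n) | q₀ ∈ subdiff J v} with hC
  have hJ0 : J 0 = 0 := by simpa using hhom 0 0
  have hq0le : ∀ v, ⟪q₀, v⟫ ≤ J v := by
    intro v
    have h := hq₀ v
    rw [hJ0, sub_zero] at h
    linarith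
  have hFsub : ∀ p ∈ F, ∀ v, ⟪p, v⟫ ≤ J v := by
    intro p hp v
    have hpF : p ∈ subdiff J 0 := hF ▸ subset_convexHull ℝ (F : Set (EuclideanSpace ℝ (Fin n))) hp
    have h := hpF v
    simpa [hJ0] using h
  -- membership in C is equivalent to `J v ≤ ⟪q₀, v⟫`
  have hmemC : ∀ v, q₀ ∈ subdiff J v ↔ J v ≤ ⟪q₀, v⟫ := by
    intro v
    constructor
    · intro h
      have h0 := h 0
      rw [hJ0] at h0
      have : ⟪q₀, (0 : EuclideanSpace ℝ (Fin n)) - v⟫ = -⟪q₀, v⟫ := by rw [zero_sub, inner_neg_right]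
      rw [this] at h0
      linarith
    · intro h w
      have h1 : ⟪q₀, w - v⟫ = ⟪q₀, w⟫ - ⟪q₀, v⟫ := inner_sub_right _ _ _
      have h2 := hq0le w
      rw [h1]
      linarith
  -- membership in C is equivalent to finitely many linear inequalities
  have hCiff : ∀ v, q₀ ∈ subdiff J v ↔ ∀ p ∈ F, ⟪p - q₀, v⟫ ≤ 0 := by
    intro v
    rw [hmemC]
    constructor
    · intro h p hp
      have h1 := hFsub p hp v
      rw [inner_sub_left]
      linarith
    · intro h
      obtain ⟨pd, hpd1, hpd2⟩ := exists_dual_vector_of_onehom J hconv hhom v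
      have hpdmem : pd ∈ subdiff J 0 := by
        intro w
        rw [hJ0, sub_zero]
        have := hpd1 w
        linarith
      have hpdF : pd ∈ convexHull ℝ (F : Set (EuclideanSpace ℝ (Fin n))) := hF ▸ hpdmem
      have hhalf : convexHull ℝ (F : Set (EuclideanSpace ℝ (Fin n))) ⊆ {x : EuclideanSpace ℝ (Fin n) | ⟪x - q₀, v⟫ ≤ 0} := by
        apply convexHull_min
        · intro p hp
          exact h p hp
        · have hseteq : {x : EuclideanSpace ℝ (Fin n) | ⟪x - q₀, v⟫ ≤ 0} = {x : EuclideanSpace ℝ (Fin n) | ⟪x, v⟫ ≤ ⟪q₀, v⟫} := by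
            ext x
            rw [Set.mem_setOf_eq, Set.mem_setOf_eq, inner_sub_left, sub_nonpos]
          rw [hseteq]
          exact convex_halfSpace_le
            ⟨fun a b => inner_add_left a b v,
             fun c x => by rw [real_inner_smul_left, smul_eq_mul]⟩ _
      have := hhalf hpdF
      rw [Set.mem_setOf_eq, inner_sub_left] at this
      linarith [hpd2]
  have hCset : C = ⋂ p ∈ F, {v : EuclideanSpace ℝ (Fin n) | ⟪p - q₀, v⟫ ≤ 0} := by
    ext v
    simp only [hC, Set.mem_setOf_eq, Set.mem_iInter]
    exact hCiff v
  -- closedness and convexity of C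
  have hCclosed : IsClosed C := by
    rw [hCset]
    exact isClosed_biInter fun p _ =>
      isClosed_le (Continuous.inner continuous_const continuous_id) continuous_const
  have hCconvex : Convex ℝ C := by
    rw [hCset]
    refine convex_iInter₂ fun p _ => ?_
    exact convex_halfSpace_le
      ⟨fun a b => inner_add_right _ a b,
       fun c x => by rw [real_inner_smul_right, smul_eq_mul]⟩ 0
  have h0C : (0 : EuclideanSpace ℝ (Fin n)) ∈ C := by
    rw [hC, Set.mem_setOf_eq, hmemC]
    simp [hJ0]
  -- the nearest point property of vhat
  have hproj : ∀ v ∈ C, ⟪f - vhat, v - vhat⟫ ≤ 0 := by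
    haveI : Nonempty C := ⟨⟨vhat, hvhat⟩⟩
    have hiInf : ‖f - vhat‖ = ⨅ w : C, ‖f - ↑w‖ := by
      refine le_antisymm (le_ciInf fun w => ?_) (ciInf_le ⟨0, ?_⟩ (⟨vhat, hvhat⟩ : C))
      · have := hclosest w w.2
        rw [norm_sub_rev vhat f, norm_sub_rev (w : (EuclideanSpace ℝ (Fin n))) f] at this
        exact this
      · rintro y ⟨w, rfl⟩
        exact norm_nonneg _
    exact (norm_eq_iInf_iff_real_inner_le_zero hCconvex hvhat).1 hiInf
  set w : EuclideanSpace ℝ (Fin n) := f - vhat with hw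
  have hJvhat : J vhat = ⟪q₀, vhat⟫ := le_antisymm ((hmemC vhat).1 hvhat) (hq0le vhat)
  have h2vhatC : ((2 : ℝ) • vhat) ∈ C := by
    rw [hC, Set.mem_setOf_eq, hmemC]
    rw [hhom, real_inner_smul_right, hJvhat]
    norm_num
  have hwvhat : ⟪w, vhat⟫ = 0 := by
    have h0 := hproj 0 h0C
    have h2 := hproj ((2 : ℝ) • vhat) h2vhatC
    rw [zero_sub, inner_neg_right] at h0
    have h2v : (2 : ℝ) • vhat - vhat = vhat := by
      rw [two_smul]; abel
    rw [h2v] at h2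
    linarith
  have hwC : ∀ v ∈ C, ⟪w, v⟫ ≤ 0 := by
    intro v hv
    have h1 := hproj v hv
    rw [inner_sub_right] at h1
    linarith [hwvhat]
  -- the cone generated by `q₀ - p`, `p ∈ F`
  set Kset := {x : EuclideanSpace ℝ (Fin n) | ∃ l : (EuclideanSpace ℝ (Fin n)) → ℝ, (∀ p ∈ F, 0 ≤ l p) ∧ ∑ p ∈ F, l p • (q₀ - p) = x}
    with hKset
  have hKclosed : IsClosed Kset := isClosed_finsetCone (fun p => q₀ - p) F
  let K : ConvexCone ℝ (EuclideanSpace ℝ (Fin n)) :=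
    { carrier := Kset
      smul_mem' := by
        rintro c hc x ⟨l, hl, rfl⟩
        refine ⟨fun p => c * l p, fun p hp => mul_nonneg hc.le (hl p hp), ?_⟩
        rw [Finset.smul_sum]
        exact Finset.sum_congr rfl fun p _ => (smul_smul c (l p) _).symm
      add_mem' := by
        rintro x ⟨l, hl, rfl⟩ y ⟨m, hm, rfl⟩
        exact ⟨fun p => l p + m p, fun p hp => add_nonneg (hl p hp) (hm p hp),
          by rw [← Finset.sum_add_distrib]
             exact Finset.sum_congr rfl fun p _ => (add_smul _ _ _)⟩ }
  have h0K : (0 : EuclideanSpace ℝ (Fin n)) ∈ Kset := ⟨fun _ => 0, fun p _ => le_rfl, by simp⟩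
  have hgen : ∀ p ∈ F, q₀ - p ∈ Kset := by
    intro p hp
    refine ⟨fun q => if q = p then 1 else 0, fun q _ => by show (0:ℝ) ≤ if q = p then 1 else 0; split_ifs <;> norm_num, ?_⟩
    show ∑ q ∈ F, (if q = p then (1:ℝ) else 0) • (q₀ - q) = q₀ - p
    simp only [ite_smul, one_smul, zero_smul]
    rw [Finset.sum_ite_eq' F p (fun q => q₀ - q), if_pos hp]
  -- Farkas: w is a nonnegative combination of the `p - q₀`
  have hdualdual : -w ∈ K := by
    let P : ProperCone ℝ (EuclideanSpace ℝ (Fin n)) :=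
      { carrier := Kset
        add_mem' := fun hx hy => K.add_mem' hx hy
        zero_mem' := h0K
        smul_mem' := by
          rintro c x ⟨l, hl, rfl⟩
          refine ⟨fun p => c * l p, fun p hp => mul_nonneg c.2 (hl p hp), ?_⟩
          show _ = (c : ℝ) • (∑ p ∈ F, l p • (q₀ - p) : EuclideanSpace ℝ (Fin n))
          rw [Finset.smul_sum]
          exact Finset.sum_congr rfl fun p _ => (smul_smul (c : ℝ) (l p) _).symm
        isClosed' := hKclosed }
    by_contra hneg
    obtain ⟨x, hx, hxw⟩ := P.hyperplane_separation' (x₀ := -w) (by exact hneg)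
    -- x belongs to the dual cone of Kset, so x ∈ C
    have hxC : x ∈ C := by
      rw [hC, Set.mem_setOf_eq, hCiff]
      intro p hp
      have := hx (q₀ - p) (hgen p hp)
      have hflip : ⟪p - q₀, x⟫ = -⟪q₀ - p, x⟫ := by
        rw [← inner_neg_left, neg_sub]
      rw [hflip]
      linarith
    have := hwC x hxC
    rw [inner_neg_left] at hxw
    linarith
  obtain ⟨l, hl, hsum⟩ := hdualdual
  have hwsum : ∑ p ∈ F, l p • (p - q₀) = w := by
    have h1 : -∑ p ∈ F, l p • (q₀ - p) = ∑ p ∈ F, l p • (p - q₀) := by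
      rw [← Finset.sum_neg_distrib]
      exact Finset.sum_congr rfl fun p _ => by rw [← smul_neg, neg_sub]
    rw [← h1, hsum, neg_neg]
  set Λ : ℝ := ∑ p ∈ F, l p with hΛ
  have hΛ0 : 0 ≤ Λ := Finset.sum_nonneg hl
  refine ⟨⟨vhat, hvhat⟩, hCclosed, hCconvex, (Λ + 1)⁻¹, by positivity, ?_⟩
  intro s hs v
  obtain ⟨hs0, hs1⟩ := hs
  have hg : 0 ≤ J v - ⟪q₀, v⟫ := sub_nonneg.2 (hq0le v)
  have hwv : ⟪w, v⟫ ≤ Λ * (J v - ⟪q₀, v⟫) := by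
    rw [← hwsum, sum_inner]
    calc ∑ p ∈ F, ⟪l p • (p - q₀), v⟫
        = ∑ p ∈ F, l p * ⟪p - q₀, v⟫ :=
          Finset.sum_congr rfl fun p _ => real_inner_smul_left _ _ _
      _ ≤ ∑ p ∈ F, l p * (J v - ⟪q₀, v⟫) := by
          refine Finset.sum_le_sum fun p hp => mul_le_mul_of_nonneg_left ?_ (hl p hp)
          have := hFsub p hp v
          rw [inner_sub_left]
          linarith
      _ = Λ * (J v - ⟪q₀, v⟫) := by rw [← Finset.sum_mul]
  show J vhat + ⟪q₀ + s • w, v - vhat⟫ ≤ J v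
  rw [inner_add_left, real_inner_smul_left, inner_sub_right, inner_sub_right,
    hJvhat, hwvhat]
  have hkey : s * ⟪w, v⟫ ≤ J v - ⟪q₀, v⟫ := by
    have h1 : s * ⟪w, v⟫ ≤ s * (Λ * (J v - ⟪q₀, v⟫)) := mul_le_mul_of_nonneg_left hwv hs0
    have h2 : s * (Λ * (J v - ⟪q₀, v⟫)) ≤ (Λ + 1)⁻¹ * (Λ * (J v - ⟪q₀, v⟫)) :=
      mul_le_mul_of_nonneg_right hs1 (mul_nonneg hΛ0 hg)
    have h3 : (Λ + 1)⁻¹ * (Λ * (J v - ⟪q₀, v⟫)) ≤ J v - ⟪q₀, v⟫ := by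
      rw [inv_mul_le_iff₀ (by linarith : (0:ℝ) < Λ + 1)]
      nlinarith
    linarith
  linarith
end

section
/- Let J : ℝ^n → ℝ be convex and absolutely one-homogeneous satisfying (PS) and (MINSUB). Let f ∈ ℝ^n, let 0 = t₀ < t₁ < ⋯ < t_K be times and p₁, …, p_K ∈ ℝ^n, and let u : [0, t_K] → ℝ^n be the piecewise-linear gradient flow: u(0) = f, and u(t) = u(t_i) − (t − t_i)·p_{i+1} for t ∈ [t_i, t_{i+1}], where for each i, p_{i+1} is the unique minimal-norm element of ∂J(u(t_i)) and p_{i+1} ∈ ∂J(u(t)) for all t ∈ [t_i, t_{i+1}]. Then: (1) for every i and every t ∈ [t_i, t_{i+1}], p_j ∈ ∂J(u(t)) for all 1 ≤ j ≤ i+1 (subgradients persist along the flow); (2) for every t ∈ (0, t_K], (f − u(t))/t ∈ ∂J(u(t)); equivalently, u(t) is the unique minimizer of the variational problem v ↦ (1/2)·‖v − f‖² + t·J(v), so the gradient flow solution and the variational (ROF-type) solution coincide. -/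
open RealInnerProductSpace

private lemma sd_inner_eq {n : ℕ} {J : EuclideanSpace ℝ (Fin n) → ℝ}
    (hhom : ∀ (s : ℝ) (u : EuclideanSpace ℝ (Fin n)), J (s • u) = |s| * J u)
    {u p : EuclideanSpace ℝ (Fin n)} (hp : p ∈ subdiff J u) :
    ⟪p, u⟫ = J u := by
  have h0 : J 0 = 0 := by
    have := hhom 0 0; simpa using this
  have h2 : J ((2:ℝ) • u) = 2 * J u := by
    have := hhom 2 u; rw [this]; norm_num
  have ha := hp ((2:ℝ) • u)
  have hb := hp 0
  rw [h2] at ha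
  rw [h0] at hb
  have e1 : (2:ℝ) • u - u = u := by module
  rw [e1] at ha
  have e2 : (0:EuclideanSpace ℝ (Fin n)) - u = -u := by module
  rw [e2, inner_neg_right] at hb
  linarith

private lemma sd_le {n : ℕ} {J : EuclideanSpace ℝ (Fin n) → ℝ}
    (hhom : ∀ (s : ℝ) (u : EuclideanSpace ℝ (Fin n)), J (s • u) = |s| * J u)
    {u p : EuclideanSpace ℝ (Fin n)} (hp : p ∈ subdiff J u) :
    ∀ v, ⟪p, v⟫ ≤ J v := by
  intro v
  have h1 := hp v
  have h2 := sd_inner_eq hhom hp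
  rw [inner_sub_right] at h1
  linarith

private lemma sd_of {n : ℕ} {J : EuclideanSpace ℝ (Fin n) → ℝ}
    {u p : EuclideanSpace ℝ (Fin n)} (h1 : ∀ v, ⟪p, v⟫ ≤ J v)
    (h2 : ⟪p, u⟫ = J u) : p ∈ subdiff J u := by
  intro v
  rw [inner_sub_right]
  have := h1 v
  linarith

/-- Equivalence of gradient flow and variational method under (PS)
and (MINSUB): for the piecewise-linear gradient flow `u` with breakpoints
`0 = t 0 < t 1 < ⋯ < t K` and minimal-norm subgradients `p i`, (1) earlier
subgradients persist: `p j ∈ ∂J(u s)` for all `j ≤ i` and `s ∈ [t i, t (i+1)]`;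
(2) for every `s ∈ (0, t K]`, `(f - u s)/s ∈ ∂J(u s)`, i.e. `u s` is the unique
minimizer of `v ↦ (1/2)‖v - f‖² + s J(v)`. -/
theorem gradient_flow_eq_variational_under_MINSUB {n K : ℕ} (hK : 0 < K)
    (J : EuclideanSpace ℝ (Fin n) → ℝ)
    (hconv : ConvexOn ℝ Set.univ J)
    (hhom : ∀ (s : ℝ) (u : EuclideanSpace ℝ (Fin n)), J (s • u) = |s| * J u)
    (hPS : ∃ F : Finset (EuclideanSpace ℝ (Fin n)),
      convexHull ℝ (F : Set (EuclideanSpace ℝ (Fin n))) = subdiff J 0)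
    (hMINSUB : ∀ w phat : EuclideanSpace ℝ (Fin n), phat ∈ subdiff J w →
      (∀ q ∈ subdiff J w, ‖phat‖ ≤ ‖q‖) →
      ∀ q ∈ subdiff J w, ⟪phat, phat - q⟫ = 0)
    (f : EuclideanSpace ℝ (Fin n))
    (t : Fin (K + 1) → ℝ) (ht0 : t 0 = 0) (htmono : StrictMono t)
    (p : Fin K → EuclideanSpace ℝ (Fin n))
    (u : ℝ → EuclideanSpace ℝ (Fin n))
    (hu0 : u 0 = f)
    (hpmem : ∀ i : Fin K, p i ∈ subdiff J (u (t i.castSucc)))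
    (hpmin : ∀ i : Fin K, ∀ q ∈ subdiff J (u (t i.castSucc)), ‖p i‖ ≤ ‖q‖)
    (hlin : ∀ i : Fin K, ∀ s ∈ Set.Icc (t i.castSucc) (t i.succ),
      u s = u (t i.castSucc) - (s - t i.castSucc) • p i)
    (hsub : ∀ i : Fin K, ∀ s ∈ Set.Icc (t i.castSucc) (t i.succ),
      p i ∈ subdiff J (u s)) :
    (∀ i : Fin K, ∀ s ∈ Set.Icc (t i.castSucc) (t i.succ),
      ∀ j : Fin K, j ≤ i → p j ∈ subdiff J (u s)) ∧
    (∀ s : ℝ, 0 < s → s ≤ t (Fin.last K) →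
      ((1 / s) • (f - u s) ∈ subdiff J (u s)) ∧
      (∀ v : EuclideanSpace ℝ (Fin n),
        (1 / 2) * ‖u s - f‖ ^ 2 + s * J (u s) ≤ (1 / 2) * ‖v - f‖ ^ 2 + s * J v) ∧
      (∀ v : EuclideanSpace ℝ (Fin n),
        (1 / 2) * ‖v - f‖ ^ 2 + s * J v = (1 / 2) * ‖u s - f‖ ^ 2 + s * J (u s) →
        v = u s)) := by
  -- Extension step: endpoint membership propagates along the linear segment,
  -- via the (MINSUB) orthogonality condition.
  have ext : ∀ i : Fin K, ∀ s ∈ Set.Icc (t i.castSucc) (t i.succ),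
      ∀ j : Fin K, p j ∈ subdiff J (u (t i.castSucc)) → p j ∈ subdiff J (u s) := by
    intro i s hs j hq
    have horth := hMINSUB (u (t i.castSucc)) (p i) (hpmem i) (hpmin i) (p j) hq
    have hle := sd_le hhom hq
    apply sd_of hle
    have hus := hlin i s hs
    have hJs : ⟪p i, u s⟫ = J (u s) := sd_inner_eq hhom (hsub i s hs)
    have hJt : ⟪p j, u (t i.castSucc)⟫ = J (u (t i.castSucc)) := sd_inner_eq hhom hq
    have hJt' : ⟪p i, u (t i.castSucc)⟫ = J (u (t i.castSucc)) :=
      sd_inner_eq hhom (hpmem i)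
    have hsym : ⟪p j, p i⟫ = ⟪p i, p i⟫ := by
      rw [inner_sub_right] at horth
      rw [real_inner_comm]
      linarith
    have e1 : ⟪p j, u s⟫
        = J (u (t i.castSucc)) - (s - t i.castSucc) * ⟪p i, p i⟫ := by
      rw [hus, inner_sub_right, real_inner_smul_right, hJt, hsym]
    have e2 : ⟪p i, u s⟫
        = J (u (t i.castSucc)) - (s - t i.castSucc) * ⟪p i, p i⟫ := by
      rw [hus, inner_sub_right, real_inner_smul_right, hJt']
    rw [e1, ← hJs, e2]
  -- Endpoint persistence by induction.
  have Q : ∀ m : ℕ, ∀ hm : m < K, ∀ j : Fin K, j.val ≤ m →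
      p j ∈ subdiff J (u (t (⟨m, hm⟩ : Fin K).castSucc)) := by
    intro m
    induction m with
    | zero =>
      intro hm j hj
      have hj0 : j = ⟨0, hm⟩ := Fin.ext (Nat.le_zero.mp hj)
      rw [hj0]; exact hpmem _
    | succ m IH =>
      intro hm j hj
      have hmK : m < K := Nat.lt_of_succ_lt hm
      rcases Nat.lt_or_ge j.val (m + 1) with hlt | hge
      · have hq := IH hmK j (Nat.lt_succ_iff.mp hlt)
        have heq : (⟨m + 1, hm⟩ : Fin K).castSucc = (⟨m, hmK⟩ : Fin K).succ := by
          ext; simp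
        rw [heq]
        exact ext ⟨m, hmK⟩ (t (⟨m, hmK⟩ : Fin K).succ)
          ⟨le_of_lt (htmono Fin.castSucc_lt_succ), le_refl _⟩ j hq
      · have hjm : j = ⟨m + 1, hm⟩ := Fin.ext (le_antisymm hj hge)
        rw [hjm]; exact hpmem _
  -- Part (1).
  have part1 : ∀ i : Fin K, ∀ s ∈ Set.Icc (t i.castSucc) (t i.succ),
      ∀ j : Fin K, j ≤ i → p j ∈ subdiff J (u s) := by
    intro i s hs j hj
    exact ext i s hs j (Q i.val i.isLt j hj)
  -- Telescoping inner-product bound.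
  have H : ∀ m : ℕ, ∀ hm : m ≤ K, ∀ (w : EuclideanSpace ℝ (Fin n)) (c : ℝ),
      (∀ j : Fin K, j.val < m → ⟪p j, w⟫ ≤ c) →
      ⟪f - u (t ⟨m, Nat.lt_succ_of_le hm⟩), w⟫ ≤ t ⟨m, Nat.lt_succ_of_le hm⟩ * c := by
    intro m
    induction m with
    | zero =>
      intro hm w c _
      have h0 : (⟨0, Nat.lt_succ_of_le hm⟩ : Fin (K + 1)) = 0 := rfl
      rw [h0, ht0, hu0]
      simp
    | succ m IH =>
      intro hm w c hc
      have hmK : m < K := hm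
      have hIcc : t (⟨m, hmK⟩ : Fin K).succ ∈
          Set.Icc (t (⟨m, hmK⟩ : Fin K).castSucc) (t (⟨m, hmK⟩ : Fin K).succ) :=
        ⟨le_of_lt (htmono Fin.castSucc_lt_succ), le_refl _⟩
      have hformula := hlin ⟨m, hmK⟩ (t (⟨m, hmK⟩ : Fin K).succ) hIcc
      have hidx : (⟨m + 1, Nat.lt_succ_of_le hm⟩ : Fin (K + 1))
          = (⟨m, hmK⟩ : Fin K).succ := rfl
      have hidx2 : (⟨m, Nat.lt_succ_of_le (le_of_lt hmK)⟩ : Fin (K + 1))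
          = (⟨m, hmK⟩ : Fin K).castSucc := rfl
      have key : f - u (t (⟨m, hmK⟩ : Fin K).succ)
          = (f - u (t (⟨m, hmK⟩ : Fin K).castSucc))
            + ((t (⟨m, hmK⟩ : Fin K).succ - t (⟨m, hmK⟩ : Fin K).castSucc)) • p ⟨m, hmK⟩ := by
        rw [hformula]; module
      rw [hidx, key, inner_add_left, real_inner_smul_left]
      have h1 := IH (le_of_lt hmK) w c (fun j hj => hc j (Nat.lt_succ_of_lt hj))
      rw [hidx2] at h1
      have h2 := hc ⟨m, hmK⟩ (Nat.lt_succ_self m)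
      have hd : 0 ≤ t (⟨m, hmK⟩ : Fin K).succ - t (⟨m, hmK⟩ : Fin K).castSucc := by
        have := htmono (Fin.castSucc_lt_succ : (⟨m, hmK⟩ : Fin K).castSucc < _)
        linarith
      nlinarith [mul_le_mul_of_nonneg_left h2 hd]
  -- Interval location.
  have loc : ∀ s : ℝ, 0 < s → s ≤ t (Fin.last K) →
      ∃ i : Fin K, t i.castSucc ≤ s ∧ s ≤ t i.succ := by
    intro s hs hsK
    have main : ∀ m : ℕ, ∀ hm : m ≤ K, s ≤ t ⟨m, Nat.lt_succ_of_le hm⟩ →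
        ∃ i : Fin K, t i.castSucc ≤ s ∧ s ≤ t i.succ := by
      intro m
      induction m with
      | zero =>
        intro hm hle
        exfalso
        have h0 : (⟨0, Nat.lt_succ_of_le hm⟩ : Fin (K + 1)) = 0 := rfl
        rw [h0, ht0] at hle
        linarith
      | succ m IH =>
        intro hm hle
        have hmK : m < K := hm
        by_cases hcase : s ≤ t ⟨m, Nat.lt_succ_of_le (le_of_lt hmK)⟩
        · exact IH (le_of_lt hmK) hcase
        · refine ⟨⟨m, hmK⟩, le_of_lt (lt_of_not_ge hcase), ?_⟩
          exact hle
    exact main K (le_refl K) hsK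
  -- Part (2), main subgradient inclusion.
  have part2main : ∀ s : ℝ, 0 < s → s ≤ t (Fin.last K) →
      (1 / s) • (f - u s) ∈ subdiff J (u s) := by
    intro s hs hsK
    obtain ⟨i, hi1, hi2⟩ := loc s hs hsK
    intro v
    have hkey : ⟪f - u s, v - u s⟫ ≤ s * (J v - J (u s)) := by
      have hus := hlin i s ⟨hi1, hi2⟩
      have hsplit : f - u s
          = (f - u (t i.castSucc)) + (s - t i.castSucc) • p i := by
        rw [hus]; module
      rw [hsplit, inner_add_left, real_inner_smul_left]
      have hH := H i.val (le_of_lt i.isLt) (v - u s) (J v - J (u s))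
        (fun j hj => by
          have hmem := part1 i s ⟨hi1, hi2⟩ j (le_of_lt hj)
          have := hmem v
          linarith)
      have hidx : (⟨i.val, Nat.lt_succ_of_le (le_of_lt i.isLt)⟩ : Fin (K + 1))
          = i.castSucc := rfl
      rw [hidx] at hH
      have h2 : ⟪p i, v - u s⟫ ≤ J v - J (u s) := by
        have := hsub i s ⟨hi1, hi2⟩ v
        linarith
      have hd : 0 ≤ s - t i.castSucc := by linarith
      nlinarith [mul_le_mul_of_nonneg_left h2 hd]
    rw [real_inner_smul_left]
    have hcancel : 1 / s * (s * (J v - J (u s))) = J v - J (u s) := by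
      field_simp
    have := mul_le_mul_of_nonneg_left hkey (le_of_lt (one_div_pos.mpr hs))
    rw [hcancel] at this
    linarith
  refine ⟨part1, fun s hs hsK => ?_⟩
  have hq := part2main s hs hsK
  have hineq : ∀ v : EuclideanSpace ℝ (Fin n),
      (1 / 2) * ‖u s - f‖ ^ 2 + s * J (u s) + (1 / 2) * ‖v - u s‖ ^ 2
        ≤ (1 / 2) * ‖v - f‖ ^ 2 + s * J v := by
    intro v
    have h1 := hq v
    rw [real_inner_smul_left] at h1
    have h2 : ⟪f - u s, v - u s⟫ ≤ s * (J v - J (u s)) := by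
      have h3 := mul_le_mul_of_nonneg_left h1 (le_of_lt hs)
      have h4 : s * (1 / s * ⟪f - u s, v - u s⟫) = ⟪f - u s, v - u s⟫ := by
        field_simp
      rw [mul_add, h4] at h3
      nlinarith
    have hexp : ‖v - f‖ ^ 2
        = ‖v - u s‖ ^ 2 + 2 * ⟪v - u s, u s - f⟫ + ‖u s - f‖ ^ 2 := by
      have hde : v - f = (v - u s) + (u s - f) := by module
      rw [hde, norm_add_sq_real]
    have hswap : ⟪v - u s, u s - f⟫ = - ⟪f - u s, v - u s⟫ := by
      rw [show u s - f = -(f - u s) from by module, inner_neg_right, real_inner_comm]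
    rw [hswap] at hexp
    nlinarith
  refine ⟨hq, fun v => ?_, fun v hv => ?_⟩
  · have := hineq v
    nlinarith [sq_nonneg ‖v - u s‖]
  · have := hineq v
    have hn : ‖v - u s‖ ^ 2 ≤ 0 := by linarith
    have hz : ‖v - u s‖ = 0 := by
      nlinarith [norm_nonneg (v - u s)]
    have := norm_eq_zero.mp hz
    exact sub_eq_zero.mp this
end

section
/- Let J : ℝ^n → ℝ be convex and absolutely one-homogeneous satisfying (MINSUB). Let u₀, u₁, …, u_{N−1} ∈ ℝ^n and p₁, …, p_N ∈ ℝ^n be such that for every 0 ≤ i ≤ N−1, p_{i+1} is the unique minimal-norm element of ∂J(u_i), and p_j ∈ ∂J(u_i) for all 1 ≤ j ≤ i+1. Then the successive differences are pairwise orthogonal: ⟨p_i − p_{i+1}, p_j − p_{j+1}⟩ = 0 for all 1 ≤ i, j ≤ N−1 with i ≠ j. Consequently, the spectral components φ^i = t_i·(p_i − p_{i+1}) (for any positive times t_i) of the gradient flow / variational spectral decomposition are mutually orthogonal. -/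
open RealInnerProductSpace

/-- Orthogonal decomposition under (MINSUB): if `p i` is, for each
`i < N`, the minimal-norm element of `∂J(u i)` (here `p i` plays the role of the
paper's `p_{i+1}`), and all earlier subgradients persist (`p j ∈ ∂J(u i)` for
`j ≤ i`), then the successive differences `p i - p (i+1)` are pairwise orthogonal;
consequently the spectral components `φ^i = tᵢ • (p i - p (i+1))` are mutually
orthogonal for any times `tᵢ`. -/
theorem spectral_components_orthogonal {n N : ℕ}
    (J : EuclideanSpace ℝ (Fin n) → ℝ)
    (hconv : ConvexOn ℝ Set.univ J)
    (hhom : ∀ (s : ℝ) (u : EuclideanSpace ℝ (Fin n)), J (s • u) = |s| * J u)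
    (hMINSUB : ∀ w phat : EuclideanSpace ℝ (Fin n), phat ∈ subdiff J w →
      (∀ q ∈ subdiff J w, ‖phat‖ ≤ ‖q‖) →
      ∀ q ∈ subdiff J w, ⟪phat, phat - q⟫ = 0)
    (u p : ℕ → EuclideanSpace ℝ (Fin n))
    (hpmem : ∀ i < N, p i ∈ subdiff J (u i))
    (hpmin : ∀ i < N, ∀ q ∈ subdiff J (u i), ‖p i‖ ≤ ‖q‖)
    (hpersist : ∀ i < N, ∀ j ≤ i, p j ∈ subdiff J (u i)) :
    (∀ i j : ℕ, i + 1 < N → j + 1 < N → i ≠ j →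
      ⟪p i - p (i + 1), p j - p (j + 1)⟫ = 0) ∧
    (∀ (τ : ℕ → ℝ), ∀ i j : ℕ, i + 1 < N → j + 1 < N → i ≠ j →
      ⟪τ i • (p i - p (i + 1)), τ j • (p j - p (j + 1))⟫ = 0) := by
  have key : ∀ i j : ℕ, i < j → j + 1 < N →
      ⟪p i - p (i + 1), p j - p (j + 1)⟫ = 0 := by
    intro i j hij hjN
    have hjN' : j < N := Nat.lt_of_succ_lt hjN
    have h1 : ⟪p j, p j - p i⟫ = 0 :=
      hMINSUB (u j) (p j) (hpmem j hjN') (hpmin j hjN') (p i)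
        (hpersist j hjN' i (le_of_lt hij))
    have h2 : ⟪p j, p j - p (i + 1)⟫ = 0 :=
      hMINSUB (u j) (p j) (hpmem j hjN') (hpmin j hjN') (p (i + 1))
        (hpersist j hjN' (i + 1) hij)
    have h3 : ⟪p (j + 1), p (j + 1) - p i⟫ = 0 :=
      hMINSUB (u (j + 1)) (p (j + 1)) (hpmem (j + 1) hjN) (hpmin (j + 1) hjN) (p i)
        (hpersist (j + 1) hjN i (by omega))
    have h4 : ⟪p (j + 1), p (j + 1) - p (i + 1)⟫ = 0 :=
      hMINSUB (u (j + 1)) (p (j + 1)) (hpmem (j + 1) hjN) (hpmin (j + 1) hjN) (p (i + 1))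
        (hpersist (j + 1) hjN (i + 1) (by omega))
    simp only [inner_sub_left, inner_sub_right] at h1 h2 h3 h4 ⊢
    have c1 : ⟪p i, p j⟫ = ⟪p j, p i⟫ := real_inner_comm _ _
    have c2 : ⟪p (i+1), p j⟫ = ⟪p j, p (i+1)⟫ := real_inner_comm _ _
    have c3 : ⟪p i, p (j+1)⟫ = ⟪p (j+1), p i⟫ := real_inner_comm _ _
    have c4 : ⟪p (i+1), p (j+1)⟫ = ⟪p (j+1), p (i+1)⟫ := real_inner_comm _ _
    linarith
  have main : ∀ i j : ℕ, i + 1 < N → j + 1 < N → i ≠ j →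
      ⟪p i - p (i + 1), p j - p (j + 1)⟫ = 0 := by
    intro i j hiN hjN hne
    rcases lt_or_gt_of_ne hne with h | h
    · exact key i j h hjN
    · rw [real_inner_comm]; exact key j i h hiN
  refine ⟨main, ?_⟩
  intro τ i j hiN hjN hne
  rw [real_inner_smul_left, real_inner_smul_right, main i j hiN hjN hne]
  ring
end

section
/- Let K be a real m×n matrix such that K·Kᵀ is diagonally dominant, i.e. (KKᵀ)_{ll} ≥ Σ_{j≠l} |(KKᵀ)_{lj}| for every l, and define J : ℝ^n → ℝ by J(u) = ‖Ku‖₁ = Σ_{l=1}^m |(Ku)_l|. Then J satisfies (MINSUB): for every u ∈ ℝ^n, the unique minimal-norm element p̂ of ∂J(u) satisfies ⟨p̂, p̂ − q⟩ = 0 for all q ∈ ∂J(u). -/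
open RealInnerProductSpace Matrix

lemma exists_shat {m n : ℕ} (K : Matrix (Fin m) (Fin n) ℝ)
    (hdd : ∀ l : Fin m,
      ∑ j ∈ Finset.univ.erase l, |(K * Kᵀ) l j| ≤ (K * Kᵀ) l l)
    (b : Fin m → ℝ) :
    ∃ s : Fin m → ℝ, (∀ l, |s l| ≤ 1) ∧ (∀ l, b l ≠ 0 → s l = Real.sign (b l)) ∧
      (∀ l, b l = 0 → ∑ i, (∑ k, s k * K k i) * K l i = 0) := by
  classical
  set f : (Fin m → ℝ) → ℝ := fun s => ∑ i, (∑ k, s k * K k i)^2 with hf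
  set C : Set (Fin m → ℝ) :=
    Set.univ.pi (fun l => if b l = 0 then Set.Icc (-1:ℝ) 1 else {Real.sign (b l)}) with hCdef
  have hsign_abs : ∀ x : ℝ, |Real.sign x| ≤ 1 := by
    intro x
    rcases lt_trichotomy x 0 with h | h | h
    · rw [Real.sign_of_neg h]; norm_num
    · rw [h, Real.sign_zero]; norm_num
    · rw [Real.sign_of_pos h]; norm_num
  have hcomp : IsCompact C := isCompact_univ_pi (fun l => by
    by_cases h : b l = 0 <;> simp [h, isCompact_Icc])
  have hmem : (fun l => Real.sign (b l)) ∈ C := by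
    intro l _
    by_cases h : b l = 0
    · simp only [h, if_pos rfl, Real.sign_zero, Set.mem_Icc]
      constructor <;> norm_num
    · simp [h]
  have hfc : Continuous f := by fun_prop
  obtain ⟨s, hsC, hsmin⟩ := hcomp.exists_isMinOn ⟨_, hmem⟩ hfc.continuousOn
  have hs1 : ∀ l, |s l| ≤ 1 := by
    intro l
    have := hsC l (Set.mem_univ l)
    by_cases h : b l = 0
    · simp only [h, if_pos rfl, Set.mem_Icc] at this; exact abs_le.2 this
    · simp only [h, if_neg h, Set.mem_singleton_iff] at this
      rw [this]; exact hsign_abs _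
  have hs2 : ∀ l, b l ≠ 0 → s l = Real.sign (b l) := by
    intro l h
    have := hsC l (Set.mem_univ l)
    simpa [h] using this
  refine ⟨s, hs1, hs2, ?_⟩
  intro j hbj
  set g : ℝ := ∑ i, (∑ k, s k * K k i) * K j i with hg
  set a : ℝ := (K * Kᵀ) j j with ha
  -- perturbation formula and feasibility
  have hpert : ∀ t : ℝ, |s j + t| ≤ 1 → 0 ≤ 2*t*g + t^2 * a := by
    intro t ht
    set s' : Fin m → ℝ := fun k => s k + if k = j then t else 0 with hs'
    have hs'C : s' ∈ C := by
      intro l _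
      by_cases hlj : l = j
      · subst hlj
        simp only [hs', if_pos rfl, hbj, if_pos rfl, Set.mem_Icc]
        exact abs_le.1 ht
      · have := hsC l (Set.mem_univ l)
        simpa [hs', hlj] using this
    have hrow : ∀ i, ∑ k, s' k * K k i = (∑ k, s k * K k i) + t * K j i := by
      intro i
      simp [hs', add_mul, Finset.sum_add_distrib, ite_mul, Finset.sum_ite_eq']
    have haK : a = ∑ i, K j i * K j i := by
      rw [ha, Matrix.mul_apply]; simp [Matrix.transpose_apply]
    have hfs' : f s' = f s + (2*t*g + t^2 * a) := by
      rw [hf]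
      simp only [hrow]
      rw [haK, hg]
      rw [Finset.mul_sum, Finset.mul_sum, ← Finset.sum_add_distrib, ← Finset.sum_add_distrib]
      apply Finset.sum_congr rfl
      intro i _
      ring
    have := hsmin hs'C
    simp only [Set.mem_setOf_eq] at this
    rw [hfs'] at this
    linarith
  -- express g via the matrix A
  have hgA : g = ∑ k, s k * (K * Kᵀ) j k := by
    rw [hg]
    simp only [Finset.sum_mul]
    rw [Finset.sum_comm]
    apply Finset.sum_congr rfl
    intro k _
    rw [Matrix.mul_apply]
    simp only [Matrix.transpose_apply]
    rw [Finset.mul_sum]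
    apply Finset.sum_congr rfl
    intro i _
    ring
  have hsplit : g = s j * a + ∑ k ∈ Finset.univ.erase j, s k * (K * Kᵀ) j k := by
    rw [hgA, ha, ← Finset.add_sum_erase _ _ (Finset.mem_univ j)]
  have hbound : |∑ k ∈ Finset.univ.erase j, s k * (K * Kᵀ) j k| ≤ a := by
    refine le_trans (Finset.abs_sum_le_sum_abs _ _) (le_trans ?_ (hdd j))
    apply Finset.sum_le_sum
    intro k _
    rw [abs_mul]
    calc |s k| * |(K * Kᵀ) j k| ≤ 1 * |(K * Kᵀ) j k| :=
          mul_le_mul_of_nonneg_right (hs1 k) (abs_nonneg _)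
      _ = |(K * Kᵀ) j k| := one_mul _
  have ha0 : 0 ≤ a := by
    have : a = ∑ i, K j i * K j i := by
      rw [ha, Matrix.mul_apply]; simp [Matrix.transpose_apply]
    rw [this]
    exact Finset.sum_nonneg fun i _ => mul_self_nonneg _
  -- if a = 0 then g = 0 directly
  by_cases haz : a = 0
  · have hK0 : ∀ i, K j i = 0 := by
      have : a = ∑ i, (K j i)^2 := by
        rw [ha, Matrix.mul_apply]; simp [Matrix.transpose_apply, sq]
      intro i
      have h2 := (Finset.sum_eq_zero_iff_of_nonneg (fun i _ => sq_nonneg (K j i))).1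
        (by rw [← this, haz]) i (Finset.mem_univ i)
      exact pow_eq_zero_iff (by norm_num) |>.1 h2
    rw [hg]
    apply Finset.sum_eq_zero
    intro i _
    rw [hK0 i, mul_zero]
  have hapos : 0 < a := lt_of_le_of_ne ha0 (Ne.symm haz)
  -- first order conditions
  have hfo1 : s j < 1 → 0 ≤ g := by
    intro hsj
    by_contra hgneg
    push_neg at hgneg
    set t : ℝ := min (1 - s j) (-g / a) with htdef
    have htpos : 0 < t := lt_min (by linarith) (div_pos (by linarith) hapos)
    have ht1 : |s j + t| ≤ 1 := by
      rw [abs_le]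
      constructor
      · have h1 : -1 ≤ s j := (abs_le.1 (hs1 j)).1
        linarith
      · have : t ≤ 1 - s j := min_le_left _ _
        linarith
    have := hpert t ht1
    have hta : t * a ≤ -g := by
      have : t ≤ -g / a := min_le_right _ _
      calc t * a ≤ (-g/a) * a := mul_le_mul_of_nonneg_right this ha0
        _ = -g := by field_simp
    nlinarith
  have hfo2 : -1 < s j → g ≤ 0 := by
    intro hsj
    by_contra hgpos
    push_neg at hgpos
    set t : ℝ := -(min (s j + 1) (g / a)) with htdef
    have htpos : 0 < -t := by
      rw [htdef, neg_neg]
      exact lt_min (by linarith) (div_pos hgpos hapos)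
    have ht1 : |s j + t| ≤ 1 := by
      rw [abs_le]
      have h1 : -t ≤ s j + 1 := by rw [htdef, neg_neg]; exact min_le_left _ _
      have h2 : s j ≤ 1 := (abs_le.1 (hs1 j)).2
      constructor <;> [linarith; linarith]
    have := hpert t ht1
    have hta : (-t) * a ≤ g := by
      have h1 : -t ≤ g / a := by rw [htdef, neg_neg]; exact min_le_right _ _
      calc (-t) * a ≤ (g/a) * a := mul_le_mul_of_nonneg_right h1 ha0
        _ = g := by field_simp
    nlinarith
  rcases lt_trichotomy g 0 with hgc | hgc | hgc
  · -- g < 0 forces s j = 1 (else hfo1), then dd gives g ≥ 0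
    have hsj1 : s j = 1 := by
      by_contra hne
      have : s j < 1 := lt_of_le_of_ne (abs_le.1 (hs1 j)).2 hne
      exact absurd (hfo1 this) (not_le.2 hgc)
    have : 0 ≤ g := by
      rw [hsplit, hsj1, one_mul]
      have := (abs_le.1 hbound).1
      linarith
    linarith
  · exact hgc
  · have hsjm1 : s j = -1 := by
      by_contra hne
      have : -1 < s j := lt_of_le_of_ne (abs_le.1 (hs1 j)).1 (Ne.symm hne)
      exact absurd (hfo2 this) (not_le.2 hgc)
    have : g ≤ 0 := by
      rw [hsplit, hsjm1, neg_one_mul]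
      have := (abs_le.1 hbound).2
      linarith
    linarith

/-- (DDL1) implies (MINSUB): if `K Kᵀ` is diagonally dominant and
`J u = ‖K u‖₁`, then for every `u` the minimal-norm element `phat` of `∂J(u)`
satisfies `⟪phat, phat - q⟫ = 0` for all `q ∈ ∂J(u)`. -/
theorem DDL1_implies_MINSUB {m n : ℕ}
    (K : Matrix (Fin m) (Fin n) ℝ)
    (hdd : ∀ l : Fin m,
      ∑ j ∈ Finset.univ.erase l, |(K * Kᵀ) l j| ≤ (K * Kᵀ) l l)
    (J : EuclideanSpace ℝ (Fin n) → ℝ)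
    (hJ : ∀ u : EuclideanSpace ℝ (Fin n), J u = ∑ l : Fin m, |K.mulVec u l|) :
    ∀ u : EuclideanSpace ℝ (Fin n), ∀ phat ∈ subdiff J u,
      (∀ q ∈ subdiff J u, ‖phat‖ ≤ ‖q‖) →
      ∀ q ∈ subdiff J u, ⟪phat, phat - q⟫ = 0 := by
  classical
  intro u phat hphat hmin q hq
  set b : Fin m → ℝ := K.mulVec u with hbdef
  obtain ⟨s, hs1, hs2, hs3⟩ := exists_shat K hdd b
  set p : EuclideanSpace ℝ (Fin n) := WithLp.toLp 2 (fun i => ∑ k, s k * K k i) with hpdef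
  set g : Fin m → ℝ := fun l => ∑ i, (∑ k, s k * K k i) * K l i with hgdef
  set F : ℝ := ∑ i, (∑ k, s k * K k i)^2 with hFdef
  have hinner : ∀ x y : EuclideanSpace ℝ (Fin n), ⟪x, y⟫ = ∑ i, x i * y i := by
    intro x y; simp [PiLp.inner_apply, mul_comm]
  have hb : ∀ l, b l = ∑ i, K l i * u i := by
    intro l; rw [hbdef]; rfl
  -- K applied to v pointwise
  have hKv : ∀ v : EuclideanSpace ℝ (Fin n), ∀ l, K.mulVec v l = ∑ i, K l i * v i := by
    intro v l; rfl
  -- sign identity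
  have hsb : ∀ l, s l * b l = |b l| := by
    intro l
    by_cases h : b l = 0
    · simp [h]
    · rw [hs2 l h]
      rcases lt_trichotomy (b l) 0 with hlt | heq | hgt
      · rw [Real.sign_of_neg hlt, abs_of_neg hlt]; ring
      · exact absurd heq h
      · rw [Real.sign_of_pos hgt, abs_of_pos hgt]; ring
  -- sum s l * g l = F
  have hsgF : ∑ l, s l * g l = F := by
    rw [hFdef]
    simp only [hgdef, Finset.mul_sum]
    rw [Finset.sum_comm]
    apply Finset.sum_congr rfl
    intro i _
    rw [sq, Finset.mul_sum]
    exact Finset.sum_congr rfl fun x _ => mul_left_comm _ _ _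
  -- ⟪p, p⟫ = F
  have hppF : ⟪p, p⟫ = F := by
    rw [hinner, hFdef]
    apply Finset.sum_congr rfl
    intro i _
    rw [sq]
  -- p is a subgradient
  have hpsub : p ∈ subdiff J u := by
    intro v
    rw [hJ u, hJ v, hinner]
    have hswap : ∑ i, p i * (v - u) i = ∑ l, s l * K.mulVec v l - ∑ l, s l * b l := by
      have : ∀ i, p i * (v - u) i = ∑ k, s k * (K k i * (v i - u i)) := by
        intro i
        show (∑ k, s k * K k i) * (v - u) i = _
        rw [Finset.sum_mul]
        apply Finset.sum_congr rfl
        intro k _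
        have : (v - u) i = v i - u i := rfl
        rw [this]; ring
      rw [Finset.sum_congr rfl fun i _ => this i, Finset.sum_comm]
      rw [← Finset.sum_sub_distrib]
      apply Finset.sum_congr rfl
      intro k _
      rw [hKv v, hb, ← mul_sub, ← Finset.sum_sub_distrib, Finset.mul_sum]
      exact Finset.sum_congr rfl fun i _ => by ring
    rw [hswap]
    have h1 : ∑ l, s l * b l = ∑ l, |b l| := Finset.sum_congr rfl fun l _ => hsb l
    rw [h1]
    have h2 : ∑ l, s l * K.mulVec v l ≤ ∑ l, |K.mulVec v l| := by
      apply Finset.sum_le_sum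
      intro l _
      calc s l * K.mulVec v l ≤ |s l * K.mulVec v l| := le_abs_self _
        _ = |s l| * |K.mulVec v l| := abs_mul _ _
        _ ≤ 1 * |K.mulVec v l| := mul_le_mul_of_nonneg_right (hs1 l) (abs_nonneg _)
        _ = |K.mulVec v l| := one_mul _
    linarith
  -- key inequality
  have hkey : ∀ r ∈ subdiff J u, ∀ ε : ℝ, (∀ l, b l ≠ 0 → |ε * g l| ≤ |b l|) →
      ε * ⟪r, p⟫ ≤ ε * F := by
    intro r hr ε hε
    have h2 := hr (u + ε • p)
    have hsub : (u + ε • p) - u = ε • p := by abel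
    rw [hsub, real_inner_smul_right] at h2
    have hKl : ∀ l, K.mulVec (WithLp.ofLp (u + ε • p)) l = b l + ε * g l := by
      intro l
      rw [hKv]
      have : ∀ i, (u + ε • p) i = u i + ε * p i := by
        intro i; rfl
      simp only [this]
      rw [hb, hgdef]
      simp only [mul_add, Finset.sum_add_distrib]
      congr 1
      rw [Finset.mul_sum]
      apply Finset.sum_congr rfl
      intro i _
      show K l i * (ε * p i) = ε * ((∑ k, s k * K k i) * K l i)
      have : p i = ∑ k, s k * K k i := rfl
      rw [this]; ring
    have habs : ∀ l, |b l + ε * g l| = |b l| + ε * (s l * g l) := by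
      intro l
      by_cases h : b l = 0
      · have hgl : g l = 0 := hs3 l h
        rw [h, hgl]
        simp
      · have hle := hε l h
        rw [hs2 l h]
        rcases lt_trichotomy (b l) 0 with hlt | heq | hgt
        · rw [Real.sign_of_neg hlt]
          have h1 : |ε * g l| ≤ -(b l) := by rw [abs_of_neg hlt] at hle; exact hle
          have h2 : ε * g l ≤ -(b l) := le_trans (le_abs_self _) h1
          rw [abs_of_nonpos (by linarith), abs_of_neg hlt]
          ring
        · exact absurd heq h
        · rw [Real.sign_of_pos hgt]
          have h1 : |ε * g l| ≤ b l := by rw [abs_of_pos hgt] at hle; exact hle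
          have h2 : -(ε * g l) ≤ b l := le_trans (neg_le_abs _) h1
          rw [abs_of_nonneg (by linarith), abs_of_pos hgt]
          ring
    have hJnew : J (u + ε • p) = J u + ε * F := by
      rw [hJ, hJ]
      simp only [hKl]
      rw [Finset.sum_congr rfl fun l _ => habs l, Finset.sum_add_distrib]
      rw [← Finset.mul_sum, hsgF]
    rw [hJnew] at h2
    linarith
  -- choose ε
  obtain ⟨ε, hεpos, hεcond⟩ : ∃ ε : ℝ, 0 < ε ∧ ∀ l, b l ≠ 0 → |ε * g l| ≤ |b l| := by
    set S : Finset (Fin m) := Finset.univ.filter (fun l => b l ≠ 0) with hS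
    by_cases hSe : S.Nonempty
    · set φ : Fin m → ℝ := fun l => |b l| / (|g l| + 1) with hφ
      refine ⟨min 1 (S.inf' hSe φ), ?_, ?_⟩
      · apply lt_min one_pos
        rw [Finset.lt_inf'_iff]
        intro l hl
        have hbl : b l ≠ 0 := by
          rw [hS, Finset.mem_filter] at hl; exact hl.2
        exact div_pos (abs_pos.2 hbl) (by positivity)
      · intro l hbl
        have hlS : l ∈ S := by rw [hS, Finset.mem_filter]; exact ⟨Finset.mem_univ l, hbl⟩
        set ε := min 1 (S.inf' hSe φ) with hε
        have hεle : ε ≤ φ l := le_trans (min_le_right _ _) (Finset.inf'_le φ hlS)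
        have hεpos' : 0 < ε := by
          apply lt_min one_pos
          rw [Finset.lt_inf'_iff]
          intro l' hl'
          have : b l' ≠ 0 := by rw [hS, Finset.mem_filter] at hl'; exact hl'.2
          exact div_pos (abs_pos.2 this) (by positivity)
        rw [abs_mul, abs_of_pos hεpos']
        calc ε * |g l| ≤ φ l * (|g l| + 1) := by
              apply mul_le_mul hεle (by linarith) (abs_nonneg _) ?_
              · exact le_trans (le_of_lt hεpos') hεle
          _ = |b l| := by
              rw [hφ]
              field_simp
    · refine ⟨1, one_pos, ?_⟩
      intro l hbl
      exact absurd (by rw [hS]; simp only [Finset.filter_nonempty_iff]; exact ⟨l, Finset.mem_univ l, hbl⟩) hSe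
  -- conclude inner products
  have hrF : ∀ r ∈ subdiff J u, ⟪r, p⟫ = F := by
    intro r hr
    have h1 := hkey r hr ε hεcond
    have h2 := hkey r hr (-ε) (by intro l hl; rw [neg_mul, abs_neg]; exact hεcond l hl)
    have h1' : ⟪r, p⟫ ≤ F := (mul_le_mul_iff_right₀ hεpos).1 h1
    have h2' : F ≤ ⟪r, p⟫ := by
      have h3 : ε * F ≤ ε * ⟪r, p⟫ := by linarith
      exact (mul_le_mul_iff_right₀ hεpos).1 h3
    linarith
  have hphatp : ⟪phat, p⟫ = F := hrF phat hphat
  have hqp : ⟪q, p⟫ = F := hrF q hq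
  have hnorm : ‖phat‖ ≤ ‖p‖ := hmin p hpsub
  have hpeq : phat = p := by
    have hsq := norm_sub_sq_real phat p
    have hpn : ‖p‖^2 = F := by
      rw [← real_inner_self_eq_norm_sq, hppF]
    have hphn : ‖phat‖^2 ≤ F := by
      rw [← hpn]
      exact pow_le_pow_left₀ (norm_nonneg _) hnorm 2
    have hle0 : ‖phat - p‖^2 ≤ 0 := by rw [hsq, hphatp]; linarith
    have h0 : ‖phat - p‖^2 = 0 := le_antisymm hle0 (sq_nonneg _)
    have h1 : ‖phat - p‖ = 0 := pow_eq_zero_iff (two_ne_zero) |>.1 h0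
    exact sub_eq_zero.1 (norm_eq_zero.1 h1)

  rw [hpeq, inner_sub_right, hppF, real_inner_comm q p, hqp, sub_self]
end
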